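/- arXiv:1906.04871 — 14 statements merged into one kernel-verified Lean document; each statement's English description precedes it below -/
import Mathlib

section
/- Let k be a natural number and let M be a matroid of rank at least k, i.e. some independent set of M has encard ≥ k. Then there exists a matroid M[k] with the same ground set as M whose independent sets are exactly the sets S for which there exists T with M.Indep T, S ⊆ T and (T \ S).encard = k. -/
open Set

namespace Stmt3Aux

variable {α : Type*} {M : Matroid α} {k : ℕ} {S T I J B B₁ B₂ : Set α}

/-- The independence predicate of the truncation. -/
def Ind (M : Matroid α) (k : ℕ) (S : Set α) : Prop :=
  ∃ T, M.Indep T ∧ S ⊆ T ∧ (T \ S).encard = (k : ℕ∞)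

lemma cast_succ_le_cast (h : (k : ℕ∞) + 1 ≤ (k : ℕ∞)) : False := by
  have h' : ((k + 1 : ℕ) : ℕ∞) ≤ (k : ℕ∞) := by push_cast; exact h
  have := Nat.cast_le.mp h'
  omega

lemma constancy (h₁ : M.IsBase B₁) (h₂ : M.IsBase B₂) (hS₁ : S ⊆ B₁) (hS₂ : S ⊆ B₂) :
    (B₁ \ S).encard = (B₂ \ S).encard := by
  have e₁ : B₁ \ S = (B₁ \ B₂) ∪ ((B₁ ∩ B₂) \ S) := by
    ext x
    constructor
    · rintro ⟨hx1, hxS⟩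
      by_cases hx2 : x ∈ B₂
      · exact Or.inr ⟨⟨hx1, hx2⟩, hxS⟩
      · exact Or.inl ⟨hx1, hx2⟩
    · rintro (⟨hx1, hx2⟩ | ⟨⟨hx1, _⟩, hxS⟩)
      · exact ⟨hx1, fun hxS => hx2 (hS₂ hxS)⟩
      · exact ⟨hx1, hxS⟩
  have e₂ : B₂ \ S = (B₂ \ B₁) ∪ ((B₁ ∩ B₂) \ S) := by
    ext x
    constructor
    · rintro ⟨hx2, hxS⟩
      by_cases hx1 : x ∈ B₁
      · exact Or.inr ⟨⟨hx1, hx2⟩, hxS⟩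
      · exact Or.inl ⟨hx2, hx1⟩
    · rintro (⟨hx2, hx1⟩ | ⟨⟨_, hx2⟩, hxS⟩)
      · exact ⟨hx2, fun hxS => hx1 (hS₁ hxS)⟩
      · exact ⟨hx2, hxS⟩
  have d₁ : Disjoint (B₁ \ B₂) ((B₁ ∩ B₂) \ S) := by
    rw [Set.disjoint_left]
    rintro x ⟨_, hx2⟩ ⟨⟨_, hx2'⟩, _⟩
    exact hx2 hx2'
  have d₂ : Disjoint (B₂ \ B₁) ((B₁ ∩ B₂) \ S) := by
    rw [Set.disjoint_left]
    rintro x ⟨_, hx1⟩ ⟨⟨hx1', _⟩, _⟩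
    exact hx1 hx1'
  rw [e₁, e₂, encard_union_eq d₁, encard_union_eq d₂, h₁.encard_diff_comm h₂]

lemma shrink (hT : M.Indep T) (hST : S ⊆ T) (hk : (k : ℕ∞) ≤ (T \ S).encard) :
    Ind M k S := by
  obtain ⟨D, hD, hDcard⟩ := Set.exists_subset_encard_eq hk
  refine ⟨S ∪ D, hT.subset (union_subset hST (hD.trans diff_subset)), subset_union_left, ?_⟩
  have hDS : D \ S = D := by
    ext x
    exact ⟨fun h => h.1, fun h => ⟨h, (hD h).2⟩⟩
  rw [union_diff_left, hDS, hDcard]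

lemma ind_iff_forall :
    Ind M k S ↔ M.Indep S ∧ ∀ B, M.IsBase B → S ⊆ B → (k : ℕ∞) ≤ (B \ S).encard := by
  constructor
  · rintro ⟨T, hT, hST, hTc⟩
    obtain ⟨B₁, hB₁, hTB₁⟩ := hT.exists_isBase_superset
    refine ⟨hT.subset hST, fun B hB hSB => ?_⟩
    rw [← constancy hB₁ hB (hST.trans hTB₁) hSB]
    rw [← hTc]
    exact encard_le_encard (diff_subset_diff_left hTB₁)
  · rintro ⟨hS, h⟩
    obtain ⟨B, hB, hSB⟩ := hS.exists_isBase_superset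
    exact shrink hB.indep hSB (h B hB hSB)

lemma maximal_of_eq (hJ : M.Indep J) (hB : M.IsBase B) (hJB : J ⊆ B)
    (hcard : (B \ J).encard = (k : ℕ∞)) : Maximal (Ind M k) J := by
  refine ⟨shrink hB.indep hJB hcard.ge, fun S hS hJS => ?_⟩
  replace hJS : J ⊆ S := hJS
  obtain ⟨hSi, hf⟩ := ind_iff_forall.1 hS
  obtain ⟨B₁, hB₁, hSB₁⟩ := hSi.exists_isBase_superset
  have h1 : (B₁ \ J).encard = (k : ℕ∞) := by
    rw [constancy hB₁ hB (hJS.trans hSB₁) hJB, hcard]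
  have hsplit : B₁ \ J = (B₁ \ S) ∪ (S \ J) := by
    ext x
    constructor
    · rintro ⟨hx1, hxJ⟩
      by_cases hxS : x ∈ S
      · exact Or.inr ⟨hxS, hxJ⟩
      · exact Or.inl ⟨hx1, hxS⟩
    · rintro (⟨hx1, hxS⟩ | ⟨hxS, hxJ⟩)
      · exact ⟨hx1, fun hxJ => hxS (hJS hxJ)⟩
      · exact ⟨hSB₁ hxS, hxJ⟩
  have hdis : Disjoint (B₁ \ S) (S \ J) := by
    rw [Set.disjoint_left]
    rintro x ⟨_, hxS⟩ ⟨hxS', _⟩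
    exact hxS hxS'
  by_contra hnot
  obtain ⟨x, hxS, hxJ⟩ := not_subset.1 hnot
  have h2 : 1 ≤ (S \ J).encard := one_le_encard_iff_nonempty.2 ⟨x, hxS, hxJ⟩
  have h3 : (k : ℕ∞) + 1 ≤ (k : ℕ∞) := by
    calc (k : ℕ∞) + 1 ≤ (B₁ \ S).encard + (S \ J).encard :=
          add_le_add (hf B₁ hB₁ hSB₁) h2
      _ = (B₁ \ J).encard := by rw [hsplit, encard_union_eq hdis]
      _ = (k : ℕ∞) := h1
  exact cast_succ_le_cast h3

lemma exists_base_eq_of_maximal (h : Maximal (Ind M k) B) :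
    ∃ B₀, M.IsBase B₀ ∧ B ⊆ B₀ ∧ (B₀ \ B).encard = (k : ℕ∞) := by
  obtain ⟨T, hT, hBT, hTc⟩ := h.1
  obtain ⟨B₀, hB₀, hTB₀⟩ := hT.exists_isBase_superset
  refine ⟨B₀, hB₀, hBT.trans hTB₀, ?_⟩
  have hge : (k : ℕ∞) ≤ (B₀ \ B).encard := by
    rw [← hTc]; exact encard_le_encard (diff_subset_diff_left hTB₀)
  by_contra hne
  have hgt : (k : ℕ∞) + 1 ≤ (B₀ \ B).encard :=
    ENat.add_one_le_iff (by simp) |>.2 (hge.lt_of_ne (Ne.symm hne))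
  have hpos : (B₀ \ B).Nonempty := by
    rw [← encard_pos]
    calc (0 : ℕ∞) < (k : ℕ∞) + 1 := zero_lt_one.trans_le le_add_self
      _ ≤ _ := hgt
  obtain ⟨x, hx⟩ := hpos
  have hxB₀ : insert x B ⊆ B₀ := insert_subset hx.1 (hBT.trans hTB₀)
  have hins : B₀ \ B = insert x (B₀ \ insert x B) := by
    ext y
    constructor
    · rintro ⟨hy0, hyB⟩
      by_cases hyx : y = x
      · exact Or.inl hyx
      · exact Or.inr ⟨hy0, by simp [hyx, hyB]⟩
    · rintro (rfl | ⟨hy0, hyB⟩)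
      · exact hx
      · exact ⟨hy0, fun h' => hyB (Or.inr h')⟩
  have hxn : x ∉ B₀ \ insert x B := fun h' => h'.2 (Or.inl rfl)
  rw [hins, encard_insert_of_notMem hxn] at hgt
  have hk' : (k : ℕ∞) ≤ (B₀ \ insert x B).encard :=
    (ENat.add_le_add_iff_right (by simp)).1 hgt
  have hind : Ind M k (insert x B) := shrink hB₀.indep hxB₀ hk'
  exact hx.2 (h.2 hind (subset_insert x B) (mem_insert x B))

lemma key_aug (hI : Ind M k I) (hInmax : ¬ Maximal (Ind M k) I)
    (hBmax : Maximal (Ind M k) B) : ∃ x ∈ B \ I, Ind M k (insert x I) := by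
  obtain ⟨hIi, hfI⟩ := ind_iff_forall.1 hI
  obtain ⟨B₀, hB₀, hBB₀, hB₀c⟩ := exists_base_eq_of_maximal hBmax
  obtain ⟨B₁, hB₁, hIB₁⟩ := hIi.exists_isBase_superset
  have hgt : (k : ℕ∞) + 1 ≤ (B₁ \ I).encard := by
    refine ENat.add_one_le_iff (by simp) |>.2 ((hfI B₁ hB₁ hIB₁).lt_of_ne fun he => ?_)
    exact hInmax (maximal_of_eq hIi hB₁ hIB₁ he.symm)
  by_contra hcon
  push_neg at hcon
  have hcl : ∀ x ∈ B \ I, x ∈ M.closure I := by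
    intro x hx
    by_contra hxcl
    have hxE : x ∈ M.E := hB₀.subset_ground (hBB₀ hx.1)
    have hxi : M.Indep (insert x I) := by
      rw [hIi.insert_indep_iff_of_notMem hx.2]
      exact ⟨hxE, hxcl⟩
    obtain ⟨B₂, hB₂, hB₂s⟩ := hxi.exists_isBase_superset
    have h1 : (B₂ \ I).encard = (B₁ \ I).encard :=
      constancy hB₂ hB₁ ((subset_insert x I).trans hB₂s) hIB₁
    have hins : B₂ \ I = insert x (B₂ \ insert x I) := by
      ext y
      constructor
      · rintro ⟨hy0, hyB⟩
        by_cases hyx : y = x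
        · exact Or.inl hyx
        · exact Or.inr ⟨hy0, by simp [hyx, hyB]⟩
      · rintro (rfl | ⟨hy0, hyB⟩)
        · exact ⟨hB₂s (mem_insert _ I), hx.2⟩
        · exact ⟨hy0, fun h' => hyB (Or.inr h')⟩
    have hxn : x ∉ B₂ \ insert x I := fun h' => h'.2 (Or.inl rfl)
    rw [hins, encard_insert_of_notMem hxn] at h1
    have hk' : (k : ℕ∞) ≤ (B₂ \ insert x I).encard := by
      refine (ENat.add_le_add_iff_right (show (1 : ℕ∞) ≠ ⊤ by simp)).1 ?_
      rw [h1]; exact hgt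
    exact hcon x hx (shrink hB₂.indep hB₂s hk')
  have hBcl : B ⊆ M.closure I := by
    intro x hxB
    by_cases hxI : x ∈ I
    · exact M.subset_closure I hIi.subset_ground hxI
    · exact hcl x ⟨hxB, hxI⟩
  have hUE : I ∪ (B₀ \ B) ⊆ M.E :=
    union_subset hIi.subset_ground (diff_subset.trans hB₀.subset_ground)
  have hB₀sub : B₀ ⊆ M.closure (I ∪ (B₀ \ B)) := by
    intro y hy
    by_cases hyB : y ∈ B
    · exact M.closure_subset_closure subset_union_left (hBcl hyB)
    · exact M.subset_closure _ hUE (Or.inr ⟨hy, hyB⟩)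
  have hsp : M.E ⊆ M.closure (I ∪ (B₀ \ B)) := by
    calc M.E = M.closure B₀ := hB₀.closure_eq.symm
      _ ⊆ M.closure (M.closure (I ∪ (B₀ \ B))) := M.closure_subset_closure hB₀sub
      _ = M.closure (I ∪ (B₀ \ B)) := M.closure_closure _
  obtain ⟨J', hJ', hIJ'⟩ := hIi.subset_isBasis_of_subset subset_union_left hUE
  have hJ'base : M.IsBase J' :=
    hJ'.indep.isBase_of_ground_subset_closure (by rw [hJ'.closure_eq_closure]; exact hsp)
  have h1 : (k : ℕ∞) + 1 ≤ (J' \ I).encard := by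
    rw [constancy hJ'base hB₁ hIJ' hIB₁]; exact hgt
  have h2 : (J' \ I).encard ≤ (k : ℕ∞) := by
    rw [← hB₀c]
    refine encard_le_encard fun y hy => ?_
    rcases hJ'.subset hy.1 with hyI | hyBB
    · exact absurd hyI hy.2
    · exact hyBB
  exact cast_succ_le_cast (h1.trans h2)

lemma key_maximal (hX : X ⊆ M.E) (hIind : Ind M k I) (hIX : I ⊆ X) :
    ∃ J, I ⊆ J ∧ Maximal (fun K => Ind M k K ∧ K ⊆ X) J := by
  obtain ⟨hIi, hfI⟩ := ind_iff_forall.1 hIind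
  obtain ⟨J', hJ', hIJ'⟩ := hIi.subset_isBasis_of_subset hIX hX
  obtain ⟨B₀, hB₀, hJ'B₀⟩ := hJ'.indep.exists_isBase_superset
  rcases le_or_gt (k : ℕ∞) ((B₀ \ J').encard) with hle | hlt
  · refine ⟨J', hIJ', ⟨shrink hB₀.indep hJ'B₀ hle, hJ'.subset⟩, fun S hS hJ'S => ?_⟩
    have hSi := (ind_iff_forall.1 hS.1).1
    exact (hJ'.eq_of_subset_indep hSi hJ'S hS.2).symm.subset
  · obtain ⟨m, hm⟩ : ∃ m : ℕ, (B₀ \ J').encard = (m : ℕ∞) := by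
      have := hlt.ne_top
      lift (B₀ \ J').encard to ℕ using (by exact ne_top_of_lt hlt) with m
      exact ⟨m, rfl⟩
    have hmk : m < k := by
      rw [hm] at hlt; exact_mod_cast hlt
    have hkI : (k : ℕ∞) ≤ (B₀ \ I).encard := hfI B₀ hB₀ (hIJ'.trans hJ'B₀)
    have hsplit : B₀ \ I = (B₀ \ J') ∪ (J' \ I) := by
      ext y
      constructor
      · rintro ⟨hy0, hyI⟩
        by_cases hyJ : y ∈ J'
        · exact Or.inr ⟨hyJ, hyI⟩
        · exact Or.inl ⟨hy0, hyJ⟩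
      · rintro (⟨hy0, hyJ⟩ | ⟨hyJ, hyI⟩)
        · exact ⟨hy0, fun hyI => hyJ (hIJ' hyI)⟩
        · exact ⟨hJ'B₀ hyJ, hyI⟩
    have hdis : Disjoint (B₀ \ J') (J' \ I) := by
      rw [Set.disjoint_left]
      rintro y ⟨_, hyJ⟩ ⟨hyJ', _⟩
      exact hyJ hyJ'
    have hkm : ((k - m : ℕ) : ℕ∞) ≤ (J' \ I).encard := by
      rw [hsplit, encard_union_eq hdis, hm] at hkI
      have : ((k - m : ℕ) : ℕ∞) + (m : ℕ∞) = (k : ℕ∞) := by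
        rw [← Nat.cast_add]
        norm_cast
        omega
      rw [← this, add_comm] at hkI
      exact (WithTop.add_le_add_iff_left (ENat.coe_ne_top m)).1 hkI
    obtain ⟨D, hD, hDcard⟩ := Set.exists_subset_encard_eq hkm
    refine ⟨J' \ D, fun y hy => ⟨hIJ' hy, fun hyD => (hD hyD).2 hy⟩, ?_⟩
    have hJDB₀ : J' \ D ⊆ B₀ := diff_subset.trans hJ'B₀
    have hcard : (B₀ \ (J' \ D)).encard = (k : ℕ∞) := by
      have hsplit2 : B₀ \ (J' \ D) = (B₀ \ J') ∪ D := by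
        ext y
        constructor
        · rintro ⟨hy0, hyJD⟩
          by_cases hyJ : y ∈ J'
          · exact Or.inr (by_contra fun hyD => hyJD ⟨hyJ, hyD⟩)
          · exact Or.inl ⟨hy0, hyJ⟩
        · rintro (⟨hy0, hyJ⟩ | hyD)
          · exact ⟨hy0, fun h' => hyJ h'.1⟩
          · exact ⟨hJ'B₀ (hD hyD).1, fun h' => h'.2 hyD⟩
      have hdis2 : Disjoint (B₀ \ J') D := by
        rw [Set.disjoint_left]
        rintro y ⟨_, hyJ⟩ hyD
        exact hyJ (hD hyD).1
      rw [hsplit2, encard_union_eq hdis2, hm, hDcard, ← Nat.cast_add]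
      norm_cast
      omega
    have hmax := maximal_of_eq (hJ'.indep.subset diff_subset) hB₀ hJDB₀ hcard
    exact ⟨⟨hmax.1, diff_subset.trans hJ'.subset⟩, fun S hS hsub => hmax.2 hS.1 hsub⟩

end Stmt3Aux

/-- If `M` is a matroid of rank at least `k` (some independent set has
`encard ≥ k`), then there is a matroid `M[k]` on the same ground set whose independent sets
are exactly the sets `S` admitting an `M`-independent superset `T` with `(T \ S).encard = k`. -/
theorem stmt_3 {α : Type*} (M : Matroid α) (k : ℕ)
    (hrank : ∃ I, M.Indep I ∧ (k : ℕ∞) ≤ I.encard) :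
    ∃ Mk : Matroid α, Mk.E = M.E ∧
      ∀ S, Mk.Indep S ↔ ∃ T, M.Indep T ∧ S ⊆ T ∧ (T \ S).encard = (k : ℕ∞) := by
  classical
  obtain ⟨I₀, hI₀, hI₀k⟩ := hrank
  refine ⟨(IndepMatroid.mk M.E (Stmt3Aux.Ind M k)
    (by
      refine Stmt3Aux.shrink hI₀ (empty_subset _) ?_
      rwa [diff_empty])
    (by
      rintro I J ⟨T, hT, hJT, hTc⟩ hIJ
      refine Stmt3Aux.shrink hT (hIJ.trans hJT) ?_
      rw [← hTc]
      exact Set.encard_le_encard (Set.diff_subset_diff_right hIJ))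
    (by
      intro I B hI hInmax hBmax
      exact Stmt3Aux.key_aug hI hInmax hBmax)
    (by
      intro X hX I hI hIX
      exact Stmt3Aux.key_maximal hX hI hIX)
    (by
      rintro I ⟨T, hT, hIT, -⟩
      exact hIT.trans hT.subset_ground)).matroid, rfl, fun S => by
        simp [IndepMatroid.matroid_indep_iff, Stmt3Aux.Ind]⟩
end

section
/- Let M be a matroid and let N be its finitarization, i.e. a matroid with the same ground set such that a set S ⊆ E is independent in N if and only if every finite subset of S is independent in M. Suppose M is nearly finitary: for every base F of N and every base B of M with B ⊆ F, the set F \ B is finite. Suppose moreover that there exists a matroid H with the same ground set whose independent sets are exactly the sets S for which there exist a base F of N and a base B of M with B ⊆ F and S ⊆ F \ B. Then M is k-nearly finitary for some k: there exists k ∈ ℕ such that for every base F of N and every base B of M with B ⊆ F one has (F \ B).encard ≤ k. -/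
/-- `N` is the finitarization of `M`: same ground set, and a subset of the ground set is
independent in `N` iff all of its finite subsets are independent in `M`. -/
def IsFinitarization {α : Type*} (N M : Matroid α) : Prop :=
  N.E = M.E ∧ ∀ S ⊆ M.E, (N.Indep S ↔ ∀ J ⊆ S, J.Finite → M.Indep J)

/-- If `M` is nearly finitary and the independence system `M̂` (whose independent
sets are the subsets of `F \ B` for bases `B ⊆ F` of `M` and its finitarization `N`) is a
matroid, then `M` is `k`-nearly finitary for some `k`. -/
theorem stmt_4 {α : Type*} (M N : Matroid α) (hfin : IsFinitarization N M)
    (hnearly : ∀ F B, N.IsBase F → M.IsBase B → B ⊆ F → (F \ B).Finite)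
    (hH : ∃ H : Matroid α, H.E = M.E ∧
      ∀ S, H.Indep S ↔ ∃ F B, N.IsBase F ∧ M.IsBase B ∧ B ⊆ F ∧ S ⊆ F \ B) :
    ∃ k : ℕ, ∀ F B, N.IsBase F → M.IsBase B → B ⊆ F → (F \ B).encard ≤ (k : ℕ∞) := by
  obtain ⟨H, hHE, hHind⟩ := hH
  obtain ⟨B₀, hB₀⟩ := H.exists_isBase
  obtain ⟨F₀, B₀', hF₀, hB₀', hsub, hB₀sub⟩ := (hHind B₀).1 hB₀.indep
  have hB₀fin : B₀.Finite := (hnearly F₀ B₀' hF₀ hB₀' hsub).subset hB₀sub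
  refine ⟨hB₀fin.toFinset.card, fun F B hF hB hBF => ?_⟩
  have hind : H.Indep (F \ B) := (hHind (F \ B)).2 ⟨F, B, hF, hB, hBF, subset_rfl⟩
  obtain ⟨B₁, hB₁, hsub₁⟩ := hind.exists_isBase_superset
  calc (F \ B).encard ≤ B₁.encard := Set.encard_mono hsub₁
    _ = B₀.encard := hB₁.encard_eq_encard_of_isBase hB₀
    _ = (hB₀fin.toFinset.card : ℕ∞) := by
        rw [Set.Finite.encard_eq_coe_toFinset_card hB₀fin]
end

section
/- Let N and M be matroids on the same finite ground set E such that every independent set of M is independent in N. Then the family { B_N \ B_M : B_N a base of N, B_M a base of M, B_M ⊆ B_N } coincides with the family { E \ U : U a maximal element (under set inclusion) of the family { I ∪ J : I independent in the dual N✶, J independent in M } }. (This expresses that N ⊖ M = (N✶ ∨ M)✶, where ∨ denotes matroid union and maximal unions are the bases of N✶ ∨ M.) -/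
open Set

/-- For matroids `N`, `M` on a common finite ground set with every `M`-independent
set `N`-independent, the family `{ B_N \ B_M : B_N base of N, B_M base of M, B_M ⊆ B_N }`
equals the family of complements (in the ground set) of the maximal unions of an
`N✶`-independent set and an `M`-independent set; i.e. `N ⊖ M = (N✶ ∨ M)✶`. -/
theorem stmt_5 {α : Type*} (N M : Matroid α) (hE : M.E = N.E) (hfin : N.E.Finite)
    (hsub : ∀ I, M.Indep I → N.Indep I) :
    {D | ∃ BN BM, N.IsBase BN ∧ M.IsBase BM ∧ BM ⊆ BN ∧ D = BN \ BM} =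
      {D | ∃ U, Maximal (fun X => ∃ I J, N✶.Indep I ∧ M.Indep J ∧ X = I ∪ J) U ∧
        D = N.E \ U} := by
  ext D
  simp only [Set.mem_setOf_eq]
  constructor
  · rintro ⟨BN, BM, hBN, hBM, hBMN, rfl⟩
    refine ⟨(N.E \ BN) ∪ BM, ⟨⟨N.E \ BN, BM, hBN.compl_isBase_dual.indep, hBM.indep, rfl⟩, ?_⟩, ?_⟩
    · rintro X ⟨I, J, hI, hJ, rfl⟩ hUX
      have hIsub : I ⊆ N.E := by
        have := hI.subset_ground; rwa [Matroid.dual_ground] at this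
      have hJsub : J ⊆ N.E := hE ▸ hJ.subset_ground
      have hXfin : (I ∪ J).Finite := hfin.subset (union_subset hIsub hJsub)
      -- cardinality bounds
      obtain ⟨BI, hBI, hIBI⟩ := hI.exists_isBase_superset
      obtain ⟨BJ, hBJ, hJBJ⟩ := hJ.exists_isBase_superset
      have h1 : I.encard ≤ (N.E \ BN).encard := by
        calc I.encard ≤ BI.encard := encard_mono hIBI
        _ = (N.E \ BN).encard := hBI.encard_eq_encard_of_isBase hBN.compl_isBase_dual
      have h2 : J.encard ≤ BM.encard := by
        calc J.encard ≤ BJ.encard := encard_mono hJBJ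
        _ = BM.encard := hBJ.encard_eq_encard_of_isBase hBM
      have hdisj : Disjoint (N.E \ BN) BM := (disjoint_sdiff_left).mono_right hBMN
      have hUcard : ((N.E \ BN) ∪ BM).encard = (N.E \ BN).encard + BM.encard :=
        encard_union_eq hdisj
      have hle : (I ∪ J).encard ≤ ((N.E \ BN) ∪ BM).encard := by
        calc (I ∪ J).encard ≤ I.encard + J.encard := encard_union_le I J
        _ ≤ (N.E \ BN).encard + BM.encard := add_le_add h1 h2
        _ = _ := hUcard.symm
      exact (hXfin.eq_of_subset_of_encard_le' hUX hle).ge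
    · rw [← diff_diff, diff_diff_cancel_left hBN.subset_ground]
  · rintro ⟨U, ⟨hP, hmax⟩, rfl⟩
    obtain ⟨I0, J0, hI0, hJ0, rfl⟩ := hP
    set U := I0 ∪ J0 with hU
    have hUE : U ⊆ N.E := by
      apply union_subset
      · have := hI0.subset_ground; rwa [Matroid.dual_ground] at this
      · exact hE ▸ hJ0.subset_ground
    have hUfin : U.Finite := hfin.subset hUE
    -- choose a maximal N✶-independent I in the family of representations
    set T : Set (Set α) := {I | I ⊆ U ∧ N✶.Indep I ∧ M.Indep (U \ I)} with hT
    have hTfin : T.Finite := hUfin.finite_subsets.subset fun I hI => hI.1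
    have hTne : T.Nonempty := ⟨I0, subset_union_left, hI0, hJ0.subset (fun y hy => hy.1.resolve_left hy.2)⟩
    obtain ⟨I, hIT, hImax⟩ := Set.Finite.exists_maximalFor id T hTfin hTne
    simp only [id] at hImax
    obtain ⟨hIU, hI, hJ⟩ := hIT
    set J := U \ I with hJdef
    have hIJU : I ∪ J = U := union_diff_cancel hIU
    have hIE : I ⊆ N.E := by
      have := hI.subset_ground; rwa [Matroid.dual_ground] at this
    -- I is a base of N✶
    have hIbase : N✶.IsBase I := by
      by_contra hIb
      obtain ⟨B, hB⟩ := N✶.exists_isBase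
      obtain ⟨x, hxBI, hxind⟩ := hI.exists_insert_of_not_isBase hIb hB
      by_cases hxU : x ∈ U
      · have hmem : insert x I ∈ T :=
          ⟨insert_subset hxU hIU, hxind, hJ.subset (diff_subset_diff_right (subset_insert x I))⟩
        have := hImax hmem (subset_insert x I)
        exact hxBI.2 (this (mem_insert x I))
      · have hPX : ∃ I' J', N✶.Indep I' ∧ M.Indep J' ∧ insert x I ∪ J = I' ∪ J' :=
          ⟨insert x I, J, hxind, hJ, rfl⟩
        have hUX : U ≤ insert x I ∪ J := by
          rw [← hIJU]; exact union_subset_union_left J (subset_insert x I)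
        have := hmax hPX hUX
        exact hxU (this (mem_union_left J (mem_insert x I)))
    have hBN : N.IsBase (N.E \ I) := hIbase.compl_isBase_of_dual
    have hJBN : J ⊆ N.E \ I := fun y hy => ⟨hUE hy.1, hy.2⟩
    -- J is a base of M
    have hJbase : M.IsBase J := by
      by_contra hJb
      obtain ⟨Bm, hBm⟩ := M.exists_isBase
      obtain ⟨x, hxBJ, hxind⟩ := hJ.exists_insert_of_not_isBase hJb hBm
      by_cases hxU : x ∈ U
      · -- x ∈ I; perform an exchange in N
        have hxI : x ∈ I := by
          by_contra hxI
          exact hxBJ.2 ⟨hxU, hxI⟩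
        have hNx : N.Indep (insert x J) := hsub _ hxind
        obtain ⟨B', hB', hsubB', hB'sub⟩ := hNx.exists_isBase_subset_union_isBase hBN
        have hB'sub' : B' ⊆ insert x (N.E \ I) := by
          refine hB'sub.trans ?_
          rw [insert_union]
          exact insert_subset_insert (union_subset hJBN subset_rfl)
        have hxnotin : x ∉ N.E \ I := fun h => h.2 hxI
        have hfinNEI : (N.E \ I).Finite := hfin.subset diff_subset
        have hcard : B'.encard = (N.E \ I).encard := hB'.encard_eq_encard_of_isBase hBN
        have hne : B' ≠ insert x (N.E \ I) := by
          intro h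
          rw [h, encard_insert_of_notMem hxnotin] at hcard
          have h1 : (N.E \ I).encard < (N.E \ I).encard + 1 :=
            (ENat.lt_add_one_iff (encard_ne_top_iff.mpr hfinNEI)).mpr le_rfl
          exact h1.ne' hcard
        obtain ⟨y, hy1, hy2⟩ := exists_of_ssubset ⟨hB'sub', fun h => hne (hB'sub'.antisymm h)⟩
        have hyx : y ≠ x := fun h => hy2 (h ▸ hsubB' (mem_insert x J))
        have hyEI : y ∈ N.E \ I := hy1.resolve_left hyx
        have hyU : y ∉ U := by
          intro hyU
          have hyJ : y ∈ J := ⟨hyU, hyEI.2⟩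
          exact hy2 (hsubB' (mem_insert_of_mem x hyJ))
        have hPX : ∃ I' J', N✶.Indep I' ∧ M.Indep J' ∧
            (N.E \ B') ∪ insert x J = I' ∪ J' :=
          ⟨N.E \ B', insert x J, hB'.compl_isBase_dual.indep, hxind, rfl⟩
        have hUX : U ≤ (N.E \ B') ∪ insert x J := by
          intro u hu
          by_cases huJ : u ∈ J
          · exact mem_union_right _ (mem_insert_of_mem x huJ)
          · have huI : u ∈ I := by
              rw [← hIJU] at hu
              exact hu.resolve_right huJ
            by_cases hux : u = x
            · exact mem_union_right _ (hux ▸ mem_insert x J)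
            · refine mem_union_left _ ⟨hIE huI, fun huB' => ?_⟩
              rcases hB'sub' huB' with h | h
              · exact hux h
              · exact h.2 huI
        have := hmax hPX hUX
        exact hyU (this (mem_union_left _ ⟨hyEI.1, hy2⟩))
      · have hPX : ∃ I' J', N✶.Indep I' ∧ M.Indep J' ∧ I ∪ insert x J = I' ∪ J' :=
          ⟨I, insert x J, hI, hxind, rfl⟩
        have hUX : U ≤ I ∪ insert x J := by
          rw [← hIJU]; exact union_subset_union_right I (subset_insert x J)
        have := hmax hPX hUX
        exact hxU (this (mem_union_right I (mem_insert x J)))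
    exact ⟨N.E \ I, J, hBN, hJbase, hJBN, by rw [← hIJU, ← diff_diff]⟩
end

section
/- Let M be a matroid, let N be the finitarization of M (a matroid on the same ground set whose independent sets are exactly those all of whose finite subsets are independent in M), let N' be the finitarization of the dual M✶, and let P be the finitarization of the dual N✶. Suppose M is nearly finitary (for every base F of N and base B of M with B ⊆ F, F \ B is finite) and M is nearly cofinitary (for every base F of N' and base B of M✶ with B ⊆ F, F \ B is finite). Then N✶ = (M^fin)✶ is nearly finitary: for every base F of P and every base B of N✶ with B ⊆ F, the set F \ B is finite. -/
/-- An independent set of `M` is independent in the finitarization `N`. -/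
lemma indep_of_indep_fin {α : Type*} {N M : Matroid α} (h : IsFinitarization N M)
    {I : Set α} (hI : M.Indep I) : N.Indep I := by
  exact (h.2 I hI.subset_ground).mpr fun J hJ _ => hI.subset hJ

/-- Every base of the finitarization `N` contains a base of `M`. -/
lemma exists_base_subset_fin_base {α : Type*} {N M : Matroid α} (h : IsFinitarization N M)
    {F : Set α} (hF : N.IsBase F) : ∃ B, M.IsBase B ∧ B ⊆ F := by
  have hFE : F ⊆ M.E := h.1 ▸ hF.subset_ground
  obtain ⟨J, hJ⟩ := M.exists_isBasis F hFE
  refine ⟨J, ?_, hJ.subset⟩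
  by_contra hJb
  obtain ⟨B₀, hB₀⟩ := M.exists_isBase
  obtain ⟨e, heB, heJ⟩ := hJ.indep.exists_insert_of_not_isBase hJb hB₀
  have heJ' : e ∈ M.E \ M.closure J := by
    rw [← hJ.indep.insert_indep_iff_of_notMem heB.2]; exact heJ
  have hFcl : F ⊆ M.closure J := hJ.subset_closure
  have heF : e ∉ F := fun hx => heJ'.2 (hFcl hx)
  -- insert e F is N-independent
  have hNind : N.Indep (insert e F) := by
    refine (h.2 (insert e F) (Set.insert_subset heJ'.1 hFE)).mpr fun K hK hKfin => ?_
    have hG : M.Indep (K \ {e}) := by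
      refine (h.2 F hFE).mp hF.indep (K \ {e}) ?_ (hKfin.diff (t := {e}))
      intro x hx
      rcases Set.mem_insert_iff.mp (hK hx.1) with h' | h'
      · exact absurd (Set.mem_singleton_iff.mpr h') hx.2
      · exact h'
    have : M.Indep (insert e (K \ {e})) := by
      rw [hG.insert_indep_iff]
      left
      refine ⟨heJ'.1, fun hcl => heJ'.2 ?_⟩
      refine M.closure_subset_closure_of_subset_closure (fun x hx => ?_) hcl
      rcases Set.mem_insert_iff.mp (hK hx.1) with h' | h'
      · exact absurd (Set.mem_singleton_iff.mpr h') hx.2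
      · exact hFcl h'
    exact this.subset fun x hx => by
      by_cases hxe : x = e
      · exact hxe ▸ Set.mem_insert _ _
      · exact Set.mem_insert_of_mem _ ⟨hx, by simp [hxe]⟩
  have := hF.eq_of_subset_indep hNind (Set.subset_insert _ _)
  exact heF (this ▸ Set.mem_insert e F)

/-- Independent sets of `N✶` are independent in `M✶`, where `N` is the finitarization of `M`. -/
lemma dual_indep_of_fin_dual_indep {α : Type*} {N M : Matroid α} (h : IsFinitarization N M)
    {X : Set α} (hX : N✶.Indep X) : M✶.Indep X := by
  rw [Matroid.dual_indep_iff_exists'] at hX ⊢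
  obtain ⟨hXE, F₀, hF₀, hdisj⟩ := hX
  obtain ⟨B, hB, hBF₀⟩ := exists_base_subset_fin_base h hF₀
  exact ⟨h.1 ▸ hXE, B, hB, hdisj.mono_right hBF₀⟩

/-- If `M` is nearly finitary and nearly cofinitary, then `(M^fin)✶ = N✶` is
nearly finitary, where `N` is the finitarization of `M`, `N'` is the finitarization of `M✶`
and `P` is the finitarization of `N✶`. -/
theorem stmt_6 {α : Type*} (M N N' P : Matroid α)
    (hN : IsFinitarization N M) (hN' : IsFinitarization N' M✶)
    (hP : IsFinitarization P N✶)
    (hnearly : ∀ F B, N.IsBase F → M.IsBase B → B ⊆ F → (F \ B).Finite)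
    (hconearly : ∀ F B, N'.IsBase F → M✶.IsBase B → B ⊆ F → (F \ B).Finite) :
    ∀ F B, P.IsBase F → N✶.IsBase B → B ⊆ F → (F \ B).Finite := by
  intro F B hF hB hBF
  have hFE : F ⊆ M.E := by
    have := hP.1 ▸ hF.subset_ground
    rwa [Matroid.dual_ground, hN.1] at this
  -- F is N'-independent
  have hFN' : N'.Indep F := by
    refine (hN'.2 F (by rwa [Matroid.dual_ground])).mpr fun K hK hKfin => ?_
    have hFPE : F ⊆ N✶.E := by rw [Matroid.dual_ground, hN.1]; exact hFE
    have hKdual : N✶.Indep K := (hP.2 F hFPE).mp hF.indep K hK hKfin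
    exact dual_indep_of_fin_dual_indep hN hKdual
  -- extend F to an N'-base F''
  obtain ⟨F'', hF'', hFF''⟩ := hFN'.exists_isBase_superset
  -- get an M✶-base B₂ inside F'', with finite difference
  obtain ⟨B₂, hB₂, hB₂F''⟩ := exists_base_subset_fin_base hN' hF''
  have hTfin : (F'' \ B₂).Finite := hconearly F'' B₂ hF'' hB₂ hB₂F''
  set T := F \ B₂ with hT
  have hTfin' : T.Finite := hTfin.subset fun x hx => ⟨hFF'' hx.1, hx.2⟩
  -- F \ T is M✶-independent; extend to an M✶-base B₃
  have hFT : M✶.Indep (F \ T) := hB₂.indep.subset fun x hx => by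
    by_contra hxB₂; exact hx.2 ⟨hx.1, hxB₂⟩
  obtain ⟨B₃, hB₃, hFTB₃⟩ := hFT.exists_isBase_superset
  -- C := M.E \ B₃ is an M-base with C ∩ F ⊆ T
  have hC : M.IsBase (M.E \ B₃) := by
    simpa using hB₃.compl_isBase_of_dual
  set C := M.E \ B₃ with hCdef
  have hCF : C ∩ F ⊆ T := fun x hx => by
    by_contra hxT
    exact hx.1.2 (hFTB₃ ⟨hx.2, hxT⟩)
  -- C is N-independent; extend to an N-base F₃
  obtain ⟨F₃, hF₃, hCF₃⟩ := (indep_of_indep_fin hN hC.indep).exists_isBase_superset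
  have hVfin : (F₃ \ C).Finite := hnearly F₃ C hF₃ hC hCF₃
  set U := T ∪ (F₃ \ C) with hU
  have hUfin : U.Finite := hTfin'.union hVfin
  have hF₃F : F₃ ∩ F ⊆ U := fun x hx => by
    by_cases hxC : x ∈ C
    · exact Or.inl (hCF ⟨hxC, hx.2⟩)
    · exact Or.inr ⟨hx.1, hxC⟩
  -- B₄ := N.E \ F₃ is an N✶-base containing F \ U
  have hB₄ : N✶.IsBase (N.E \ F₃) := hF₃.compl_isBase_dual
  have hFUB₄ : F \ U ⊆ N.E \ F₃ := fun x hx =>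
    ⟨by rw [hN.1]; exact hFE hx.1, fun hxF₃ => hx.2 (hF₃F ⟨hxF₃, hx.1⟩)⟩
  set B₄ := N.E \ F₃ with hB₄def
  -- B \ B₄ ⊆ U, hence finite; by base exchange symmetry B₄ \ B is finite
  have hBB₄ : B \ B₄ ⊆ U := fun x hx => by
    by_contra hxU
    exact hx.2 (hFUB₄ ⟨hBF hx.1, hxU⟩)
  have h1 : (B \ B₄).Finite := hUfin.subset hBB₄
  have h2 : (B₄ \ B).Finite := (hB.sdiff_finite_comm hB₄).mp h1
  -- conclude
  have : F \ B ⊆ U ∪ (B₄ \ B) := fun x hx => by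
    by_cases hxU : x ∈ U
    · exact Or.inl hxU
    · exact Or.inr ⟨hFUB₄ ⟨hx.1, hxU⟩, hx.2⟩
  exact (hUfin.union h2).subset this
end

section
/- Let M be a matroid with finitarization N, and suppose M is k-nearly finitary for some k ∈ ℕ: for every base F of N and every base B of M with B ⊆ F, (F \ B).encard ≤ k. Define S(M) := { F✶ ∪ B : F✶ a base of N✶, B a base of M, F✶ ∩ B = ∅ }. Then S(M) has a minimal element with respect to set inclusion: there exists X ∈ S(M) such that every Y ∈ S(M) with Y ⊆ X equals X. -/
/-- If `M` is `k`-nearly finitary (with finitarization `N`), then the family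
`S(M) = { F✶ ∪ B : F✶ base of N✶, B base of M, F✶ ∩ B = ∅ }` has a minimal element with
respect to set inclusion. -/
theorem stmt_7 {α : Type*} (M N : Matroid α) (hfin : IsFinitarization N M) (k : ℕ)
    (hk : ∀ F B, N.IsBase F → M.IsBase B → B ⊆ F → (F \ B).encard ≤ (k : ℕ∞)) :
    ∃ X ∈ {X | ∃ Fs B, N✶.IsBase Fs ∧ M.IsBase B ∧ Fs ∩ B = ∅ ∧ X = Fs ∪ B},
      ∀ Y ∈ {X | ∃ Fs B, N✶.IsBase Fs ∧ M.IsBase B ∧ Fs ∩ B = ∅ ∧ X = Fs ∪ B},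
        Y ⊆ X → Y = X := by
  obtain ⟨hE, hind⟩ := hfin
  -- every base of M is independent in N
  have hMind : ∀ B, M.IsBase B → N.Indep B := by
    intro B hB
    rw [hind B (hE ▸ hE ▸ hB.subset_ground)]
    exact fun J hJ _ ↦ hB.indep.subset hJ
  classical
  set P : ℕ → Prop := fun n ↦ ∃ F B, N.IsBase F ∧ M.IsBase B ∧ B ⊆ F ∧ (F \ B).encard = n with hP
  -- existence of some n ≤ k with P n
  obtain ⟨B₀, hB₀⟩ := M.exists_isBase
  obtain ⟨F₀, hF₀, hBF₀⟩ := (hMind B₀ hB₀).exists_isBase_superset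
  have hkle : ∀ n, P n → n ≤ k := by
    intro n ⟨F, B, hF, hB, hBF, hcard⟩
    have := hk F B hF hB hBF
    rw [hcard] at this
    exact_mod_cast this
  have hP0 : ∃ n, n ≤ k ∧ P n := by
    have hle := hk F₀ B₀ hF₀ hB₀ hBF₀
    have hfin' : (F₀ \ B₀).Finite := Set.finite_of_encard_le_coe hle
    refine ⟨hfin'.toFinset.card, ?_, F₀, B₀, hF₀, hB₀, hBF₀,
      hfin'.encard_eq_coe_toFinset_card⟩
    exact hkle _ ⟨F₀, B₀, hF₀, hB₀, hBF₀, hfin'.encard_eq_coe_toFinset_card⟩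
  obtain ⟨n₀, hn₀k, hPn₀⟩ := hP0
  have hmax : P (Nat.findGreatest P k) := Nat.findGreatest_spec hn₀k hPn₀
  obtain ⟨F, B, hF, hB, hBF, hcard⟩ := hmax
  have hFdiff : (F \ B).Finite := Set.finite_of_encard_le_coe (le_of_eq hcard)
  refine ⟨(N.E \ F) ∪ B, ⟨N.E \ F, B, hF.compl_isBase_dual, hB, ?_, rfl⟩, ?_⟩
  · ext x; simp only [Set.mem_inter_iff, Set.mem_diff, Set.mem_empty_iff_false, iff_false]
    rintro ⟨⟨-, hxF⟩, hxB⟩; exact hxF (hBF hxB)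
  · rintro Y ⟨Fs', B', hFs', hB', hdisj, rfl⟩ hYX
    obtain ⟨hF'base, hFs'E⟩ := Matroid.dual_isBase_iff'.1 hFs'
    obtain ⟨F', hF'⟩ : ∃ F', F' = N.E \ Fs' := ⟨_, rfl⟩
    rw [← hF'] at hF'base
    have hB'E : B' ⊆ N.E := hE ▸ hB'.subset_ground
    have hB'F' : B' ⊆ F' := by
      rw [hF']
      intro x hx
      refine ⟨hB'E hx, fun hxFs' ↦ ?_⟩
      have : x ∈ Fs' ∩ B' := ⟨hxFs', hx⟩
      simp [hdisj] at this
    have hFs'eq : Fs' = N.E \ F' := by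
      rw [hF', Set.diff_diff_cancel_left hFs'E]
    -- rewrite both sides as complements
    have hXeq : (N.E \ F) ∪ B = N.E \ (F \ B) := by
      rw [Set.diff_diff_right, Set.inter_eq_self_of_subset_right (hBF.trans hF.subset_ground)]
    have hYeq : Fs' ∪ B' = N.E \ (F' \ B') := by
      rw [hFs'eq, Set.diff_diff_right, Set.inter_eq_self_of_subset_right hB'E]

    rw [hXeq, hYeq] at hYX
    -- Y ⊆ X gives F \ B ⊆ F' \ B'
    have hsub : F \ B ⊆ F' \ B' := by
      intro x hx
      by_contra hxn
      have hxE : x ∈ N.E := hF.subset_ground hx.1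
      have : x ∈ N.E \ (F \ B) := hYX ⟨hxE, hxn⟩
      exact this.2 hx
    -- maximality of cardinality gives equality
    have hle' : (F' \ B').encard ≤ (F \ B).encard := by
      have hfin' : (F' \ B').Finite :=
        Set.finite_of_encard_le_coe (hk F' B' hF'base hB' hB'F')
      have hPcard : P hfin'.toFinset.card :=
        ⟨F', B', hF'base, hB', hB'F', hfin'.encard_eq_coe_toFinset_card⟩
      have hle : hfin'.toFinset.card ≤ Nat.findGreatest P k := by
        by_contra h
        exact Nat.findGreatest_is_greatest (not_le.1 h) (hkle _ hPcard) hPcard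
      rw [hfin'.encard_eq_coe_toFinset_card, hcard]
      exact_mod_cast hle
    have heq : F \ B = F' \ B' := by
      by_contra hne
      have := Set.Finite.eq_of_subset_of_encard_le
        hFdiff hsub hle'
      exact hne this
    rw [hYeq, hXeq, heq]
end

section
/- Fix k ∈ ℕ. Let M be a matroid with finitarization N, and suppose M is nearly finitary (for every base F of N and base B of M with B ⊆ F, F \ B is finite) but not n-nearly finitary for any n ∈ ℕ (for every n there exist a base F of N and a base B of M with B ⊆ F and n < (F \ B).encard). Let Mk be a matroid with the same ground set whose independent sets are exactly the sets S for which there exists T with M.Indep T, S ⊆ T and (T \ S).encard = k (i.e. Mk = M[k]; note M[k]^fin = M^fin = N). Then Mk is nearly finitary but not n-nearly finitary for any n: for every base F of N and base B of Mk with B ⊆ F, F \ B is finite, and for every n ∈ ℕ there exist a base F of N and a base B of Mk with B ⊆ F and n < (F \ B).encard. -/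
open Set

/-- For an independent set `I` and a base `B`, `I \ B` is at most as big as `B \ I`. -/
lemma indep_diff_le_base_diff {α : Type*} {M : Matroid α} {I B : Set α}
    (hI : M.Indep I) (hB : M.IsBase B) : (I \ B).encard ≤ (B \ I).encard := by
  obtain ⟨B', hB', hIB'⟩ := hI.exists_isBase_superset
  calc (I \ B).encard ≤ (B' \ B).encard := encard_le_encard (diff_subset_diff_left hIB')
    _ = (B \ B').encard := hB'.encard_diff_comm hB
    _ ≤ (B \ I).encard := encard_le_encard (diff_subset_diff_right hIB')

/-- If `M` is nearly finitary but not `n`-nearly finitary for any `n`, then so is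
`M[k]`, the matroid whose independent sets are the `S` with an `M`-independent superset `T`
satisfying `(T \ S).encard = k` (note `M[k]` has the same finitarization `N` as `M`). -/
theorem stmt_8 {α : Type*} (k : ℕ) (M N Mk : Matroid α) (hfin : IsFinitarization N M)
    (hnearly : ∀ F B, N.IsBase F → M.IsBase B → B ⊆ F → (F \ B).Finite)
    (hnotk : ∀ n : ℕ, ∃ F B, N.IsBase F ∧ M.IsBase B ∧ B ⊆ F ∧ (n : ℕ∞) < (F \ B).encard)
    (hMkE : Mk.E = M.E)
    (hMk : ∀ S, Mk.Indep S ↔ ∃ T, M.Indep T ∧ S ⊆ T ∧ (T \ S).encard = (k : ℕ∞)) :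
    (∀ F B, N.IsBase F → Mk.IsBase B → B ⊆ F → (F \ B).Finite) ∧
      (∀ n : ℕ, ∃ F B, N.IsBase F ∧ Mk.IsBase B ∧ B ⊆ F ∧ (n : ℕ∞) < (F \ B).encard) := by
  constructor
  · -- nearly finitary
    intro F B hF hB hBF
    obtain ⟨T, hT, hBT, hTB⟩ := (hMk B).1 hB.indep
    -- T is a base of M
    have hTbase : M.IsBase T := by
      by_contra h
      obtain ⟨B₁, hB₁⟩ := M.exists_isBase
      obtain ⟨e, he, hins⟩ := hT.exists_insert_of_not_isBase h hB₁
      have heT : e ∉ T := he.2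
      have : Mk.Indep (insert e B) := by
        rw [hMk]
        refine ⟨insert e T, hins, insert_subset_insert hBT, ?_⟩
        rw [show insert e T \ insert e B = T \ B by
          ext x
          simp only [mem_diff, mem_insert_iff]
          constructor
          · rintro ⟨(rfl | hx), hx'⟩
            · exact absurd (Or.inl rfl) hx'
            · exact ⟨hx, fun hb => hx' (Or.inr hb)⟩
          · rintro ⟨hx, hx'⟩
            exact ⟨Or.inr hx, fun h => h.elim (fun h => heT (h ▸ hx)) hx'⟩]
        exact hTB
      have := hB.eq_of_subset_indep this (subset_insert e B)
      exact heT (hBT (this ▸ mem_insert e B))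
    -- T is N-independent, extend to an N-base F'
    have hTN : N.Indep T := by
      rw [(hfin.2 T hT.subset_ground)]
      exact fun J hJ hJfin => hT.subset hJ
    obtain ⟨F', hF', hTF'⟩ := hTN.exists_isBase_superset
    have hF'T : (F' \ T).Finite := hnearly F' T hF' hTbase hTF'
    have hTBfin : (T \ B).Finite := finite_of_encard_eq_coe hTB
    have hF'B : (F' \ B).Finite := by
      have : F' \ B ⊆ (F' \ T) ∪ (T \ B) := by
        intro x hx
        by_cases hxT : x ∈ T
        · exact Or.inr ⟨hxT, hx.2⟩
        · exact Or.inl ⟨hx.1, hxT⟩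
      exact (hF'T.union hTBfin).subset this
    have hF'F : (F' \ F).Finite := hF'B.subset (diff_subset_diff_right hBF)
    have hFF' : (F \ F').Finite := by
      rw [← encard_ne_top_iff, hF.encard_diff_comm hF', encard_ne_top_iff]
      exact hF'F
    have : F \ B ⊆ (F \ F') ∪ (F' \ B) := by
      intro x hx
      by_cases hxF' : x ∈ F'
      · exact Or.inr ⟨hxF', hx.2⟩
      · exact Or.inl ⟨hx.1, hxF'⟩
    exact (hFF'.union hF'B).subset this
  · -- not n-nearly finitary for any n
    intro n
    obtain ⟨F, B₀, hF, hB₀, hB₀F, hn⟩ := hnotk n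
    -- the empty set is Mk-independent, giving an M-independent set of size k
    obtain ⟨T₀, hT₀, -, hT₀k⟩ := (hMk ∅).1 Mk.empty_indep
    rw [diff_empty] at hT₀k
    -- B₀ has at least k elements
    have hkB₀ : (k : ℕ∞) ≤ B₀.encard := by
      calc (k : ℕ∞) = T₀.encard := hT₀k.symm
        _ = (T₀ \ B₀).encard + (T₀ ∩ B₀).encard := (encard_diff_add_encard_inter T₀ B₀).symm
        _ ≤ (B₀ \ T₀).encard + (B₀ ∩ T₀).encard := by
            gcongr ?_ + ?_
            · exact indep_diff_le_base_diff hT₀ hB₀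
            · rw [inter_comm]
        _ = B₀.encard := encard_diff_add_encard_inter B₀ T₀
    obtain ⟨D, hDB₀, hD⟩ := exists_subset_encard_eq hkB₀
    refine ⟨F, B₀ \ D, hF, ?_, (diff_subset).trans hB₀F, lt_of_lt_of_le hn
      (encard_le_encard (diff_subset_diff_right diff_subset))⟩
    rw [Matroid.isBase_iff_maximal_indep]
    have hBind : Mk.Indep (B₀ \ D) := by
      rw [hMk]
      exact ⟨B₀, hB₀.indep, diff_subset, by
        rw [Set.sdiff_sdiff_right_self]; simpa [Set.inter_eq_self_of_subset_right hDB₀] using hD⟩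
    refine ⟨hBind, fun S hS hBS => ?_⟩
    obtain ⟨T', hT', hST', hT'S⟩ := (hMk S).1 hS
    have hBT' : B₀ \ D ⊆ T' := hBS.trans hST'
    -- B₀ \ T' = D \ T'
    have hBT'eq : B₀ \ T' = D \ T' := by
      ext x
      constructor
      · rintro ⟨hx, hx'⟩
        refine ⟨?_, hx'⟩
        by_contra hxD
        exact hx' (hBT' ⟨hx, hxD⟩)
      · rintro ⟨hx, hx'⟩
        exact ⟨hDB₀ hx, hx'⟩
    -- B₀ ∩ T' \ (B₀ \ D) = D ∩ T'
    have hsplit1 : T' \ (B₀ \ D) = (T' \ B₀) ∪ (D ∩ T') := by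
      ext x
      simp only [mem_diff, mem_union, mem_inter_iff, not_and, not_not]
      constructor
      · rintro ⟨hx, hx'⟩
        by_cases hxB : x ∈ B₀
        · exact Or.inr ⟨hx' hxB, hx⟩
        · exact Or.inl ⟨hx, hxB⟩
      · rintro (⟨hx, hx'⟩ | ⟨hx, hx'⟩)
        · exact ⟨hx, fun h => absurd h hx'⟩
        · exact ⟨hx', fun _ => hx⟩
    have hT'ind : M.Indep T' := hT'
    have hle : (T' \ (B₀ \ D)).encard ≤ (k : ℕ∞) := by
      calc (T' \ (B₀ \ D)).encard = ((T' \ B₀) ∪ (D ∩ T')).encard := by rw [hsplit1]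
        _ ≤ (T' \ B₀).encard + (D ∩ T').encard := encard_union_le _ _
        _ ≤ (B₀ \ T').encard + (D ∩ T').encard := by
            gcongr ?_ + _; exact indep_diff_le_base_diff hT'ind hB₀
        _ = (D \ T').encard + (D ∩ T').encard := by rw [hBT'eq]
        _ = D.encard := encard_diff_add_encard_inter D T'
        _ = (k : ℕ∞) := hD
    have hsplit2 : T' \ (B₀ \ D) = (T' \ S) ∪ (S \ (B₀ \ D)) := by
      ext x
      simp only [mem_diff, mem_union]
      constructor
      · rintro ⟨hx, hx'⟩
        by_cases hxS : x ∈ S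
        · exact Or.inr ⟨hxS, hx'⟩
        · exact Or.inl ⟨hx, hxS⟩
      · rintro (⟨hx, hx'⟩ | ⟨hx, hx'⟩)
        · exact ⟨hx, fun h => hx' (hBS h)⟩
        · exact ⟨hST' hx, hx'⟩
    have hdisj : Disjoint (T' \ S) (S \ (B₀ \ D)) :=
      disjoint_of_subset_right diff_subset disjoint_sdiff_left
    have heq : (k : ℕ∞) + (S \ (B₀ \ D)).encard = (T' \ (B₀ \ D)).encard := by
      rw [hsplit2, encard_union_eq hdisj, hT'S]
    have : (S \ (B₀ \ D)).encard = 0 := by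
      have h1 : (k : ℕ∞) + (S \ (B₀ \ D)).encard ≤ (k : ℕ∞) + 0 := by
        rw [add_zero, heq]; exact hle
      have h2 : (S \ (B₀ \ D)).encard ≤ 0 :=
        (WithTop.add_le_add_iff_left (by simp : (k : ℕ∞) ≠ ⊤)).1 h1
      exact le_antisymm h2 zero_le
    rw [encard_eq_zero, diff_eq_empty] at this
    exact this
end

section
/- Let M and N be matroids with disjoint ground sets, let NM be the finitarization of M, NN the finitarization of N, and let D := M ⊕ N be the disjoint sum (Mathlib's Matroid.disjointSum), the matroid on E(M) ∪ E(N) whose independent sets are exactly the sets I ∪ J with I independent in M and J independent in N. Let P be the finitarization of D. Suppose M is nearly finitary but not n-nearly finitary for any n ∈ ℕ (with respect to NM), and N is nearly finitary (with respect to NN). Then D is nearly finitary but not n-nearly finitary for any n: for every base F of P and base B of D with B ⊆ F, F \ B is finite, and for every n ∈ ℕ there exist a base F of P and a base B of D with B ⊆ F and n < (F \ B).encard. -/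
theorem finitarization_of_disjointSum {α : Type*} (M N : Matroid α) (hdisj : Disjoint M.E N.E)
    (NM NN P : Matroid α)
    (hNM : IsFinitarization NM M) (hNN : IsFinitarization NN N)
    (hP : IsFinitarization P (M.disjointSum N hdisj)) :
    P = NM.disjointSum NN (by rw [hNM.1, hNN.1]; exact hdisj) := by
  have hE : P.E = M.E ∪ N.E := by simpa using hP.1
  refine Matroid.ext_indep (by simp [hE, hNM.1, hNN.1]) ?_
  intro I hI
  rw [hE] at hI
  rw [(hP.2 I (by simpa using hI)), Matroid.disjointSum_indep_iff]
  have hIM : I ∩ NM.E ⊆ M.E := by rw [hNM.1]; exact Set.inter_subset_right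
  have hIN : I ∩ NN.E ⊆ N.E := by rw [hNN.1]; exact Set.inter_subset_right
  rw [hNM.2 _ hIM, hNN.2 _ hIN]
  constructor
  · intro h
    refine ⟨fun J hJ hJf => ?_, fun J hJ hJf => ?_, by rwa [hNM.1, hNN.1]⟩
    · have := h J (hJ.trans Set.inter_subset_left) hJf
      rw [Matroid.disjointSum_indep_iff] at this
      have hJM : J ∩ M.E = J := by
        rw [Set.inter_eq_left]; exact hJ.trans (by rw [hNM.1]; exact Set.inter_subset_right)
      rw [hJM] at this; exact this.1
    · have := h J (hJ.trans Set.inter_subset_left) hJf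
      rw [Matroid.disjointSum_indep_iff] at this
      have hJN : J ∩ N.E = J := by
        rw [Set.inter_eq_left]; exact hJ.trans (by rw [hNN.1]; exact Set.inter_subset_right)
      rw [hJN] at this; exact this.2.1
  · rintro ⟨hM, hN, hsub⟩ J hJ hJf
    rw [Matroid.disjointSum_indep_iff]
    refine ⟨hM _ ?_ (hJf.inter_of_left _), hN _ ?_ (hJf.inter_of_left _), (hJ.trans hI)⟩
    · rw [hNM.1]; exact Set.inter_subset_inter_left _ hJ
    · rw [hNN.1]; exact Set.inter_subset_inter_left _ hJ

/-- If `M` is nearly finitary but not `n`-nearly finitary for any `n`, and `N` is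
nearly finitary, and their ground sets are disjoint, then the disjoint sum `M ⊕ N` is nearly
finitary but not `n`-nearly finitary for any `n`. -/
theorem stmt_9 {α : Type*} (M N : Matroid α) (hdisj : Disjoint M.E N.E)
    (NM NN P : Matroid α)
    (hNM : IsFinitarization NM M) (hNN : IsFinitarization NN N)
    (hP : IsFinitarization P (M.disjointSum N hdisj))
    (hMnearly : ∀ F B, NM.IsBase F → M.IsBase B → B ⊆ F → (F \ B).Finite)
    (hMnotk : ∀ n : ℕ, ∃ F B, NM.IsBase F ∧ M.IsBase B ∧ B ⊆ F ∧ (n : ℕ∞) < (F \ B).encard)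
    (hNnearly : ∀ F B, NN.IsBase F → N.IsBase B → B ⊆ F → (F \ B).Finite) :
    (∀ F B, P.IsBase F → (M.disjointSum N hdisj).IsBase B → B ⊆ F → (F \ B).Finite) ∧
      (∀ n : ℕ, ∃ F B, P.IsBase F ∧ (M.disjointSum N hdisj).IsBase B ∧ B ⊆ F ∧
        (n : ℕ∞) < (F \ B).encard) := by
  have hPeq := finitarization_of_disjointSum M N hdisj NM NN P hNM hNN hP
  have hindN : ∀ I, N.Indep I → NN.Indep I := fun I hI => by
    rw [hNN.2 I hI.subset_ground]
    exact fun J hJ _ => hI.subset hJ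
  constructor
  · intro F B hF hB hBF
    rw [hPeq, Matroid.disjointSum_isBase_iff] at hF
    rw [Matroid.disjointSum_isBase_iff] at hB
    have h1 : ((F ∩ NM.E) \ (B ∩ M.E)).Finite :=
      hMnearly _ _ hF.1 hB.1 (by
        rw [hNM.1]; exact Set.inter_subset_inter_left _ hBF)
    have h2 : ((F ∩ NN.E) \ (B ∩ N.E)).Finite :=
      hNnearly _ _ hF.2.1 hB.2.1 (by
        rw [hNN.1]; exact Set.inter_subset_inter_left _ hBF)
    have hcover : F \ B ⊆ ((F ∩ NM.E) \ (B ∩ M.E)) ∪ ((F ∩ NN.E) \ (B ∩ N.E)) := by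
      rintro x ⟨hxF, hxB⟩
      have hxE : x ∈ M.E ∪ N.E := by
        have := hF.2.2 hxF; rwa [hNM.1, hNN.1] at this
      rcases hxE with hx | hx
      · exact Or.inl ⟨⟨hxF, by rwa [hNM.1]⟩, fun h => hxB h.1⟩
      · exact Or.inr ⟨⟨hxF, by rwa [hNN.1]⟩, fun h => hxB h.1⟩
    exact (h1.union h2).subset hcover
  · intro n
    obtain ⟨F₀, B₀, hF₀, hB₀, hB₀F₀, hcard⟩ := hMnotk n
    obtain ⟨B₁, hB₁⟩ := N.exists_isBase
    obtain ⟨F₁, hF₁, hB₁F₁⟩ := (hindN _ hB₁.indep).exists_isBase_superset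
    have hF₀E : F₀ ⊆ M.E := hF₀.subset_ground.trans (by rw [hNM.1])
    have hF₁E : F₁ ⊆ N.E := hF₁.subset_ground.trans (by rw [hNN.1])
    have hB₀E : B₀ ⊆ M.E := hB₀.subset_ground
    have hB₁E : B₁ ⊆ N.E := hB₁.subset_ground
    refine ⟨F₀ ∪ F₁, B₀ ∪ B₁, ?_, ?_, Set.union_subset_union hB₀F₀ hB₁F₁, ?_⟩
    · rw [hPeq, Matroid.disjointSum_isBase_iff]
      have e1 : (F₀ ∪ F₁) ∩ NM.E = F₀ := by
        rw [hNM.1, Set.union_inter_distrib_right, Set.inter_eq_left.2 hF₀E,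
          (hdisj.symm.mono_left hF₁E).inter_eq, Set.union_empty]
      have e2 : (F₀ ∪ F₁) ∩ NN.E = F₁ := by
        rw [hNN.1, Set.union_inter_distrib_right, Set.inter_eq_left.2 hF₁E,
          (hdisj.mono_left hF₀E).inter_eq, Set.empty_union]
      refine ⟨by rwa [e1], by rwa [e2], ?_⟩
      rw [hNM.1, hNN.1]; exact Set.union_subset_union hF₀E hF₁E
    · rw [Matroid.disjointSum_isBase_iff]
      have e1 : (B₀ ∪ B₁) ∩ M.E = B₀ := by
        rw [Set.union_inter_distrib_right, Set.inter_eq_left.2 hB₀E,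
          (hdisj.symm.mono_left hB₁E).inter_eq, Set.union_empty]
      have e2 : (B₀ ∪ B₁) ∩ N.E = B₁ := by
        rw [Set.union_inter_distrib_right, Set.inter_eq_left.2 hB₁E,
          (hdisj.mono_left hB₀E).inter_eq, Set.empty_union]
      refine ⟨by rwa [e1], by rwa [e2], Set.union_subset_union hB₀E hB₁E⟩
    · refine hcard.trans_le (Set.encard_le_encard ?_)
      rintro x ⟨hxF, hxB⟩
      refine ⟨Or.inl hxF, ?_⟩
      rintro (h | h)
      · exact hxB h
      · exact hdisj.ne_of_mem (hF₀E hxF) (hB₁E h) rfl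
end

section
/- Let M be a matroid with finitarization N that is nearly finitary but not n-nearly finitary for any n ∈ ℕ (for every n there exist a base F of N and a base B of M with B ⊆ F and n < (F \ B).encard). Let S ⊆ E(M) be a finite set and let P be the finitarization of the deletion M ＼ S (Mathlib's Matroid.delete). Then M ＼ S is nearly finitary but not n-nearly finitary for any n: for every base F of P and base B of M ＼ S with B ⊆ F, F \ B is finite, and for every n ∈ ℕ there exist a base F of P and a base B of M ＼ S with B ⊆ F and n < (F \ B).encard. -/
/-- The deletion `M ＼ X` of a set `X` from a matroid `M`: the restriction of `M`
to `M.E \ X`. -/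
def Matroid.del {α : Type*} (M : Matroid α) (X : Set α) : Matroid α := M.restrict (M.E \ X)

lemma indep_mono {α : Type*} {M N : Matroid α} (hfin : IsFinitarization N M)
    {I : Set α} (hI : M.Indep I) : N.Indep I :=
  (hfin.2 I hI.subset_ground).2 fun J hJ _ => hI.subset hJ

lemma P_eq_NdelS {α : Type*} {M N : Matroid α} (hfin : IsFinitarization N M)
    {S : Set α} {P : Matroid α} (hP : IsFinitarization P (M.del S)) :
    P = N.del S := by
  have hE : (M.del S).E = M.E \ S := rfl
  apply Matroid.ext_indep
  · rw [hP.1, hE, Matroid.del, Matroid.restrict_ground_eq, hfin.1]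
  · intro I hI
    rw [hP.1, hE] at hI
    rw [hP.2 I (by rw [hE]; exact hI)]
    simp only [Matroid.del, Matroid.restrict_indep_iff]
    rw [hfin.1]
    constructor
    · intro h
      refine ⟨(hfin.2 I (hI.trans Set.diff_subset)).2 fun J hJ hJfin => ?_, hI⟩
      exact ((h J hJ hJfin).1)
    · rintro ⟨hNI, -⟩ J hJ hJfin
      exact ⟨(hfin.2 I (hI.trans Set.diff_subset)).1 hNI J hJ hJfin, hJ.trans hI⟩

section Main
variable {α : Type*} {M N : Matroid α}

/-- Part 1 core: finiteness for the deletion. -/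
lemma part1 (hfin : IsFinitarization N M)
    (hnearly : ∀ F B, N.IsBase F → M.IsBase B → B ⊆ F → (F \ B).Finite)
    {S : Set α} (hSfin : S.Finite) {F B : Set α}
    (hF : (N.del S).IsBase F) (hB : (M.del S).IsBase B) (hBF : B ⊆ F) :
    (F \ B).Finite := by
  have hNE : N.E = M.E := hfin.1
  -- F is a basis of N.E \ S in N
  have hFb : N.IsBasis F (N.E \ S) := (Matroid.isBase_restrict_iff Set.diff_subset).1 hF
  have hBb : M.IsBasis B (M.E \ S) := (Matroid.isBase_restrict_iff Set.diff_subset).1 hB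
  obtain ⟨F', hF', hFeq⟩ := hFb.exists_isBase
  obtain ⟨B0, hB0, hBeq⟩ := hBb.exists_isBase
  have hFF' : F ⊆ F' := by rw [hFeq]; exact Set.inter_subset_left
  have hBB0 : B ⊆ B0 := by rw [hBeq]; exact Set.inter_subset_left
  set I := B0 ∩ F' with hI
  have hIindep : M.Indep I := hB0.indep.subset Set.inter_subset_left
  obtain ⟨B'', hB'', hIB'', hB''sub⟩ := hIindep.exists_isBase_subset_union_isBase hB0
  have hB''B0 : B'' ⊆ B0 := hB''sub.trans (Set.union_subset Set.inter_subset_left subset_rfl)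
  have hB''N : N.Indep B'' := indep_mono hfin hB''.indep
  obtain ⟨F'', hF'', hBF'', hF''sub⟩ := hB''N.exists_isBase_subset_union_isBase hF'
  have h1 : (F'' \ B'').Finite := hnearly F'' B'' hF'' hB'' hBF''
  -- B0 \ B ⊆ S
  have hB0B : B0 \ B ⊆ S := by
    intro x hx
    by_contra hxS
    exact hx.2 (by rw [hBeq]; exact ⟨hx.1, hB0.subset_ground hx.1, hxS⟩)
  -- F'' \ F' ⊆ B0 \ B
  have h2 : (F' \ F'').Finite := by
    have : F'' \ F' ⊆ B0 \ B := by
      intro x hx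
      have hxB'' : x ∈ B'' := (hF''sub hx.1).resolve_right hx.2
      refine ⟨hB''B0 hxB'', fun hxB => hx.2 (hFF' (hBF hxB))⟩
    have hfin2 : (F'' \ F').Finite := (hSfin.subset (this.trans hB0B))
    have := hF'.encard_diff_comm hF''
    rw [← Set.encard_ne_top_iff] at hfin2 ⊢
    rwa [this]
  have h3 : (B'' \ B).Finite := hSfin.subset ((Set.diff_subset_diff_left hB''B0).trans hB0B)
  refine ((h2.union h1).union h3).subset ?_
  intro x hx
  have hxF' : x ∈ F' := hFF' hx.1
  by_cases hxF'' : x ∈ F''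
  · by_cases hxB'' : x ∈ B''
    · exact Or.inr ⟨hxB'', hx.2⟩
    · exact Or.inl (Or.inr ⟨hxF'', hxB''⟩)
  · exact Or.inl (Or.inl ⟨hxF', hxF''⟩)

end Main

lemma part2 {α : Type*} {M N : Matroid α} (hfin : IsFinitarization N M)
    (hnotk : ∀ n : ℕ, ∃ F B, N.IsBase F ∧ M.IsBase B ∧ B ⊆ F ∧ (n : ℕ∞) < (F \ B).encard)
    {S : Set α} (hSfin : S.Finite) (n : ℕ) :
    ∃ F B, (N.del S).IsBase F ∧ (M.del S).IsBase B ∧ B ⊆ F ∧ (n : ℕ∞) < (F \ B).encard := by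
  have hNE : N.E = M.E := hfin.1
  lift S.encard to ℕ using hSfin.encard_lt_top.ne with k hk
  have hkt : (k : ℕ∞) ≠ ⊤ := ENat.coe_ne_top k
  obtain ⟨F0, B0, hF0, hB0, hB0F0, hlt⟩ := hnotk (n + 3 * k)
  -- build B : basis of M.E \ S extending B0 \ S
  obtain ⟨B, hBb, hB0SB⟩ := (hB0.indep.subset Set.diff_subset).subset_isBasis_of_subset
    (Set.diff_subset_diff_left hB0.subset_ground) Set.diff_subset
  obtain ⟨B1, hB1, hBeq⟩ := hBb.exists_isBase
  have hBB1 : B ⊆ B1 := by rw [hBeq]; exact Set.inter_subset_left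
  have hBB0 : ((B \ B0).encard : ℕ∞) ≤ k := by
    have h1 : (B \ B0).encard ≤ (B1 \ B0).encard :=
      Set.encard_le_encard (Set.diff_subset_diff_left hBB1)
    have h2 : (B1 \ B0).encard = (B0 \ B1).encard := hB1.encard_diff_comm hB0
    have h3 : B0 \ B1 ⊆ S := by
      intro x hx
      by_contra hxS
      exact hx.2 (hBB1 (hB0SB ⟨hx.1, hxS⟩))
    calc (B \ B0).encard ≤ (B0 \ B1).encard := h1.trans_eq h2
      _ ≤ S.encard := Set.encard_le_encard h3
      _ = k := hk.symm
  -- build Fbig : basis of N.E \ S extending F0 \ S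
  obtain ⟨Fbig, hFbigb, hF0S⟩ := (hF0.indep.subset Set.diff_subset).subset_isBasis_of_subset
    (Set.diff_subset_diff_left hF0.subset_ground) Set.diff_subset
  have hFbigBase : (N.del S).IsBase Fbig := (Matroid.isBase_restrict_iff Set.diff_subset).2 hFbigb
  have hBdel : (M.del S).IsBase B := (Matroid.isBase_restrict_iff Set.diff_subset).2 hBb
  have hBNindep : (N.del S).Indep B := by
    rw [Matroid.del, Matroid.restrict_indep_iff]
    exact ⟨indep_mono hfin hBb.indep, by rw [hNE]; exact hBb.subset⟩
  obtain ⟨F, hF, hBF, hFsub⟩ := hBNindep.exists_isBase_subset_union_isBase hFbigBase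
  refine ⟨F, B, hF, hBdel, hBF, ?_⟩
  -- counting
  have hFbigF : (Fbig \ F).encard ≤ (k : ℕ∞) := by
    have h2 : (Fbig \ F).encard = (F \ Fbig).encard := hFbigBase.encard_diff_comm hF
    have h3 : F \ Fbig ⊆ B \ B0 := by
      intro x hx
      have hxB : x ∈ B := (hFsub hx.1).resolve_right hx.2
      refine ⟨hxB, fun hxB0 => hx.2 (hF0S ⟨hB0F0 hxB0, fun hxS => ?_⟩)⟩
      exact (hBb.subset hxB).2 hxS
    calc (Fbig \ F).encard = (F \ Fbig).encard := h2
      _ ≤ (B \ B0).encard := Set.encard_le_encard h3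
      _ ≤ k := hBB0
  set T := (F0 \ B0) \ S with hT
  have hT1 : ((n : ℕ∞) + 2 * k) + k < T.encard + k := by
    have hsub : F0 \ B0 ⊆ T ∪ S := fun x hx => by
      by_cases h : x ∈ S
      · exact Or.inr h
      · exact Or.inl ⟨hx, h⟩
    have : (F0 \ B0).encard ≤ T.encard + k := by
      calc (F0 \ B0).encard ≤ (T ∪ S).encard := Set.encard_le_encard hsub
        _ ≤ T.encard + S.encard := Set.encard_union_le T S
        _ = T.encard + k := by rw [hk]
    refine lt_of_lt_of_le (lt_of_eq_of_lt ?_ hlt) this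
    push_cast
    ring
  have hT1' : (n : ℕ∞) + 2 * k < T.encard := (WithTop.add_lt_add_iff_right hkt).1 hT1
  have hT2 : T ⊆ (F \ B) ∪ (Fbig \ F) ∪ (B \ B0) := by
    intro x hx
    have hxFbig : x ∈ Fbig := hF0S ⟨hx.1.1, hx.2⟩
    by_cases hxF : x ∈ F
    · by_cases hxB : x ∈ B
      · exact Or.inr ⟨hxB, hx.1.2⟩
      · exact Or.inl (Or.inl ⟨hxF, hxB⟩)
    · exact Or.inl (Or.inr ⟨hxFbig, hxF⟩)
  have hT3 : T.encard ≤ (F \ B).encard + 2 * k := by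
    calc T.encard ≤ ((F \ B) ∪ (Fbig \ F) ∪ (B \ B0)).encard := Set.encard_le_encard hT2
      _ ≤ ((F \ B) ∪ (Fbig \ F)).encard + (B \ B0).encard := Set.encard_union_le _ _
      _ ≤ (F \ B).encard + (Fbig \ F).encard + (B \ B0).encard := by
          exact add_le_add_left (Set.encard_union_le _ _) _
      _ ≤ (F \ B).encard + k + k := add_le_add (add_le_add_right hFbigF _) hBB0
      _ = (F \ B).encard + 2 * k := by ring
  have := hT1'.trans_le hT3
  have h2k : (2 * (k : ℕ∞)) ≠ ⊤ := by
    rw [show (2 * (k:ℕ∞)) = ((2*k : ℕ) : ℕ∞) by push_cast; ring]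
    exact ENat.coe_ne_top _
  exact (WithTop.add_lt_add_iff_right h2k).1 this

/-- If `M` is nearly finitary but not `n`-nearly finitary for any `n`, and
`S ⊆ M.E` is finite, then the deletion `M ＼ S` is nearly finitary but not `n`-nearly
finitary for any `n`. -/
theorem stmt_10 {α : Type*} (M N : Matroid α) (hfin : IsFinitarization N M)
    (hnearly : ∀ F B, N.IsBase F → M.IsBase B → B ⊆ F → (F \ B).Finite)
    (hnotk : ∀ n : ℕ, ∃ F B, N.IsBase F ∧ M.IsBase B ∧ B ⊆ F ∧ (n : ℕ∞) < (F \ B).encard)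
    (S : Set α) (hS : S ⊆ M.E) (hSfin : S.Finite)
    (P : Matroid α) (hP : IsFinitarization P (M.del S)) :
    (∀ F B, P.IsBase F → (M.del S).IsBase B → B ⊆ F → (F \ B).Finite) ∧
      (∀ n : ℕ, ∃ F B, P.IsBase F ∧ (M.del S).IsBase B ∧ B ⊆ F ∧ (n : ℕ∞) < (F \ B).encard) := by
  have hPN : P = N.del S := P_eq_NdelS hfin hP
  constructor
  · intro F B hF hB hBF
    exact part1 hfin hnearly hSfin (hPN ▸ hF) hB hBF
  · intro n
    obtain ⟨F, B, hF, hB, hBF, hlt⟩ := part2 hfin hnotk hSfin n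
    exact ⟨F, B, hPN ▸ hF, hB, hBF, hlt⟩
end

section
/- Let M be a matroid with finitarization N that is nearly finitary but not n-nearly finitary for any n ∈ ℕ, and suppose T ⊆ E(M) is a set of coloops of M (every e ∈ T is a coloop, i.e. is contained in every base of M). Let P be the finitarization of the contraction M ／ T (Mathlib's Matroid.contract). Then M ／ T is nearly finitary but not n-nearly finitary for any n: for every base F of P and base B of M ／ T with B ⊆ F, F \ B is finite, and for every n ∈ ℕ there exist a base F of P and a base B of M ／ T with B ⊆ F and n < (F \ B).encard. -/
/-- The contraction `M ／ X`, defined by `M ／ X = (M✶ ＼ X)✶`. -/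
def Matroid.con {α : Type*} (M : Matroid α) (X : Set α) : Matroid α := (M✶.del X)✶


open Set

theorem conGround {α : Type*} (M : Matroid α) (T : Set α) : (M.con T).E = M.E \ T := rfl

theorem conBase_iff {α : Type*} {M : Matroid α} {T B : Set α} (hT : T ⊆ M.E)
    (hco : ∀ e ∈ T, ∀ B, M.IsBase B → e ∈ B) :
    (M.con T).IsBase B ↔ B ⊆ M.E \ T ∧ M.IsBase (B ∪ T) := by
  have hdis : ∀ I, M✶.Indep I → I ⊆ M.E \ T := by
    intro I hI
    obtain ⟨hIE, B0, hB0, hdisj⟩ := Matroid.dual_indep_iff_exists'.1 hI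
    exact fun x hx => ⟨hIE hx, fun hxT => hdisj.ne_of_mem hx (hco x hxT B0 hB0) rfl⟩
  have hpred : (M✶.restrict (M.E \ T)).Indep = M✶.Indep := by
    funext I
    exact propext ⟨fun h => (Matroid.restrict_indep_iff.1 h).1,
      fun h => Matroid.restrict_indep_iff.2 ⟨h, hdis I h⟩⟩
  have hrb : ∀ X, (M✶.restrict (M.E \ T)).IsBase X ↔ M✶.IsBase X := by
    intro X
    rw [Matroid.isBase_iff_maximal_indep, Matroid.isBase_iff_maximal_indep, hpred]
  rw [show M.con T = (M✶.restrict (M.E \ T))✶ from rfl]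
  constructor
  · intro h
    rw [Matroid.dual_isBase_iff'] at h
    obtain ⟨h1, h2⟩ := h
    simp only [Matroid.restrict_ground_eq] at h1 h2
    rw [hrb] at h1
    rw [Matroid.dual_isBase_iff (diff_subset.trans diff_subset)] at h1
    have hset : M.E \ ((M.E \ T) \ B) = B ∪ T := by
      ext x
      simp only [mem_diff, mem_union, not_and, not_not]
      constructor
      · rintro ⟨hxE, hx⟩
        by_cases hxT : x ∈ T
        · exact Or.inr hxT
        · exact Or.inl (hx ⟨hxE, hxT⟩)
      · rintro (hxB | hxT)
        · exact ⟨(h2 hxB).1, fun _ => hxB⟩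
        · exact ⟨hT hxT, fun hc => absurd hxT hc.2⟩
    rw [hset] at h1
    exact ⟨h2, h1⟩
  · rintro ⟨hBss, hbase⟩
    rw [Matroid.dual_isBase_iff']
    simp only [Matroid.restrict_ground_eq]
    refine ⟨(hrb _).2 ?_, hBss⟩
    rw [Matroid.dual_isBase_iff (diff_subset.trans diff_subset)]
    have hset : M.E \ ((M.E \ T) \ B) = B ∪ T := by
      ext x
      simp only [mem_diff, mem_union, not_and, not_not]
      constructor
      · rintro ⟨hxE, hx⟩
        by_cases hxT : x ∈ T
        · exact Or.inr hxT
        · exact Or.inl (hx ⟨hxE, hxT⟩)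
      · rintro (hxB | hxT)
        · exact ⟨(hBss hxB).1, fun _ => hxB⟩
        · exact ⟨hT hxT, fun hc => absurd hxT hc.2⟩
    rwa [hset]

theorem conIndep_iff {α : Type*} {M : Matroid α} {T J : Set α} (hT : T ⊆ M.E)
    (hco : ∀ e ∈ T, ∀ B, M.IsBase B → e ∈ B) :
    (M.con T).Indep J ↔ J ⊆ M.E \ T ∧ M.Indep J := by
  constructor
  · intro h
    obtain ⟨B, hB, hJB⟩ := Matroid.indep_iff.1 h
    rw [conBase_iff hT hco] at hB
    exact ⟨hJB.trans hB.1, hB.2.indep.subset (hJB.trans subset_union_left)⟩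
  · rintro ⟨hJ, hind⟩
    obtain ⟨B0, hB0, hJB0⟩ := hind.exists_isBase_superset
    refine Matroid.indep_iff.2 ⟨B0 \ T, ?_, fun x hx => ⟨hJB0 hx, (hJ hx).2⟩⟩
    rw [conBase_iff hT hco]
    refine ⟨diff_subset_diff_left hB0.subset_ground, ?_⟩
    rwa [diff_union_self, union_eq_left.2 fun e he => hco e he B0 hB0]


/-- If `M` is nearly finitary but not `n`-nearly finitary for any `n`, and
`T ⊆ M.E` is a set of coloops of `M` (elements contained in every base), then the contraction
`M ／ T` is nearly finitary but not `n`-nearly finitary for any `n`. -/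
theorem stmt_12 {α : Type*} (M N : Matroid α) (hfin : IsFinitarization N M)
    (hnearly : ∀ F B, N.IsBase F → M.IsBase B → B ⊆ F → (F \ B).Finite)
    (hnotk : ∀ n : ℕ, ∃ F B, N.IsBase F ∧ M.IsBase B ∧ B ⊆ F ∧ (n : ℕ∞) < (F \ B).encard)
    (T : Set α) (hT : T ⊆ M.E) (hcoloop : ∀ e ∈ T, ∀ B, M.IsBase B → e ∈ B)
    (P : Matroid α) (hP : IsFinitarization P (M.con T)) :
    (∀ F B, P.IsBase F → (M.con T).IsBase B → B ⊆ F → (F \ B).Finite) ∧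
      (∀ n : ℕ, ∃ F B, P.IsBase F ∧ (M.con T).IsBase B ∧ B ⊆ F ∧ (n : ℕ∞) < (F \ B).encard) := by
  obtain ⟨hNE, hNI⟩ := hfin
  obtain ⟨hPE, hPI⟩ := hP
  have hTN' : T ⊆ N.E := hNE ▸ hT
  -- T is contained in every base of N
  have hTN : ∀ e ∈ T, ∀ F, N.IsBase F → e ∈ F := by
    intro e he F hF
    by_contra hne
    have hFE : F ⊆ M.E := hF.subset_ground.trans hNE.subset
    have hsub : insert e F ⊆ M.E := insert_subset (hT he) hFE
    have hins : N.Indep (insert e F) := by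
      rw [hNI _ hsub]
      intro J hJ hJfin
      have hJ' : M.Indep (J \ {e}) := by
        refine ((hNI F hFE).1 hF.indep) (J \ {e}) ?_ hJfin.diff
        intro x hx
        rcases hJ hx.1 with h | h
        · exact absurd h hx.2
        · exact h
      obtain ⟨B1, hB1, hsub1⟩ := hJ'.exists_isBase_superset
      refine hB1.indep.subset ?_
      intro x hx
      by_cases hxe : x = e
      · exact hxe ▸ hcoloop e he B1 hB1
      · exact hsub1 ⟨hx, hxe⟩
    have := hF.eq_of_subset_indep hins (subset_insert e F)
    exact hne (this ▸ mem_insert e F)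
  have hconE : (M.con T).E = M.E \ T := rfl
  -- P has the same independent sets as N.con T
  have hPind : ∀ S, P.Indep S ↔ (N.con T).Indep S := by
    intro S
    by_cases hS : S ⊆ M.E \ T
    · rw [conIndep_iff hTN' hTN]
      have hS' : S ⊆ M.E := hS.trans diff_subset
      rw [hPI S (hconE ▸ hS : S ⊆ (M.con T).E)]
      constructor
      · intro h
        refine ⟨hNE ▸ hS, (hNI S hS').2 fun J hJ hJfin => ?_⟩
        exact ((conIndep_iff hT hcoloop).1 (h J hJ hJfin)).2
      · rintro ⟨-, hNS⟩
        intro J hJ hJfin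
        rw [conIndep_iff hT hcoloop]
        exact ⟨(hJ.trans hS), (hNI S hS').1 hNS J hJ hJfin⟩
    · constructor
      · intro h
        exact absurd (hconE ▸ hPE ▸ h.subset_ground) hS
      · intro h
        have := h.subset_ground
        rw [conGround, hNE] at this
        exact absurd this hS
  have hPbase : ∀ F, P.IsBase F ↔ F ⊆ M.E \ T ∧ N.IsBase (F ∪ T) := by
    intro F
    have : P.Indep = (N.con T).Indep := funext fun S => propext (hPind S)
    rw [Matroid.isBase_iff_maximal_indep, this, ← Matroid.isBase_iff_maximal_indep,
      conBase_iff hTN' hTN, hNE]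
  constructor
  · intro F B hF hB hBF
    rw [hPbase] at hF
    rw [conBase_iff hT hcoloop] at hB
    have hfin' := hnearly (F ∪ T) (B ∪ T) hF.2 hB.2 (union_subset_union_left T hBF)
    refine hfin'.subset fun x hx => ⟨Or.inl hx.1, ?_⟩
    rintro (h | h)
    · exact hx.2 h
    · exact (hF.1 hx.1).2 h
  · intro n
    obtain ⟨F0, B0, hF0, hB0, hsub, hcard⟩ := hnotk n
    have hTF0 : T ⊆ F0 := fun e he => hTN e he F0 hF0
    have hTB0 : T ⊆ B0 := fun e he => hcoloop e he B0 hB0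
    refine ⟨F0 \ T, B0 \ T, ?_, ?_, diff_subset_diff_left hsub, ?_⟩
    · rw [hPbase]
      exact ⟨diff_subset_diff_left (hNE ▸ hF0.subset_ground),
        by rwa [diff_union_self, union_eq_left.2 hTF0]⟩
    · rw [conBase_iff hT hcoloop]
      exact ⟨diff_subset_diff_left hB0.subset_ground,
        by rwa [diff_union_self, union_eq_left.2 hTB0]⟩
    · have hset : (F0 \ T) \ (B0 \ T) = F0 \ B0 := by
        ext x
        simp only [mem_diff, not_and, not_not]
        constructor
        · rintro ⟨⟨hxF, hxT⟩, hx⟩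
          exact ⟨hxF, fun hxB => hxT (hx hxB)⟩
        · rintro ⟨hxF, hxB⟩
          exact ⟨⟨hxF, fun hxT => hxB (hTB0 hxT)⟩, fun hxB0 => absurd hxB0 hxB⟩
      rwa [hset]
end

section
/- Let M be a matroid with finitarization N. Then the following are equivalent: (1) there exists a matroid P with the same ground set whose independent sets are exactly the sets S such that S is independent in N and there exists T independent in M with T ⊆ S and S \ T finite (i.e. the near finitarization M^nfin is a matroid); (2) M is nearly finitary, i.e. for every base F of N and every base B of M with B ⊆ F, the set F \ B is finite. Moreover, when (2) holds, P = N, so M^nfin is a finitary matroid. -/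
open Set

section aux

variable {α : Type*} {M N : Matroid α}

/-- `M`-independent sets are `N`-independent, where `N` is the finitarization. -/
lemma indep_of_indep_aux (hfin : IsFinitarization N M) {S : Set α} (hS : M.Indep S) :
    N.Indep S :=
  ((hfin.2 S hS.subset_ground).2 fun _ hJ _ => hS.subset hJ)

/-- A maximal `M`-independent subset of an `N`-base is an `M`-base. -/
lemma basis_base_aux (hfin : IsFinitarization N M) {F B : Set α}
    (hF : N.IsBase F) (hB : M.IsBasis B F) : M.IsBase B := by
  obtain ⟨B', hB', hBB'⟩ := hB.indep.exists_isBase_superset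
  suffices h : B' ⊆ B by exact h.antisymm hBB' ▸ hB'
  intro x hxB'
  by_contra hxB
  -- then `insert x B` is `M`-independent and `x ∉ F`
  have hxF : x ∉ F := fun hxF =>
    hxB (hB.mem_of_insert_indep hxF (hB'.indep.subset (insert_subset hxB' hBB')))
  have hxcl : x ∉ M.closure B := by
    rw [hB.indep.notMem_closure_iff_of_notMem hxB (hB'.subset_ground hxB')]
    exact hB'.indep.subset (insert_subset hxB' hBB')
  -- show `insert x F` is `N`-independent, contradicting that `F` is an `N`-base
  have hFE : F ⊆ M.E := hF.subset_ground.trans_eq hfin.1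
  have hNF : ∀ J ⊆ F, J.Finite → M.Indep J := (hfin.2 F hFE).1 hF.indep
  have : N.Indep (insert x F) := by
    rw [hfin.2 _ (insert_subset (hB'.subset_ground hxB') hFE)]
    intro J hJ hJfin
    by_cases hxJ : x ∈ J
    · have hJ0 : M.Indep (J \ {x}) :=
        hNF _ (fun y hy => (hJ hy.1).resolve_left hy.2) hJfin.diff
      have hsub : M.closure (J \ {x}) ⊆ M.closure B := by
        rw [hB.closure_eq_closure]
        exact M.closure_subset_closure fun y hy =>
          (mem_insert_iff.1 (hJ hy.1)).resolve_left fun h => hy.2 (by simp [h])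
      have hxJ0 : x ∉ M.closure (J \ {x}) := fun h => hxcl (hsub h)
      have := (hJ0.insert_indep_iff_of_notMem (fun h => h.2 rfl)).2
        ⟨hB'.subset_ground hxB', hxJ0⟩
      rwa [insert_diff_singleton, insert_eq_of_mem hxJ] at this
    · exact hNF J (fun y hy => (mem_insert_iff.1 (hJ hy)).resolve_left fun h => hxJ (h ▸ hy)) hJfin
  exact hxF (hF.mem_of_insert_indep this)

/-- The key lemma: if `M` is nearly finitary then every `N`-independent set is
near-finitarization independent. -/
lemma nfin_indep_aux (hfin : IsFinitarization N M)
    (H : ∀ F B, N.IsBase F → M.IsBase B → B ⊆ F → (F \ B).Finite) {S : Set α} (hS : N.Indep S) :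
    ∃ T, M.Indep T ∧ T ⊆ S ∧ (S \ T).Finite := by
  obtain ⟨F, hF, hSF⟩ := hS.exists_isBase_superset
  have hFE : F ⊆ M.E := hF.subset_ground.trans_eq hfin.1
  obtain ⟨B, hB⟩ := M.exists_isBasis F hFE
  have hBbase : M.IsBase B := basis_base_aux hfin hF hB
  have hfinFB : (F \ B).Finite := H F B hF hBbase hB.subset
  exact ⟨S ∩ B, hB.indep.subset inter_subset_right, inter_subset_left,
    (hfinFB.subset fun x hx => ⟨hSF hx.1, fun h => hx.2 ⟨hx.1, h⟩⟩)⟩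

end aux

/-- The near finitarization `M^nfin` (whose independent sets are the
`N`-independent sets `S` with an `M`-independent subset `T ⊆ S` such that `S \ T` is finite,
where `N = M^fin`) is a matroid if and only if `M` is nearly finitary; moreover in that case
`M^nfin = N`, a finitary matroid. -/
theorem stmt_14 {α : Type*} (M N : Matroid α) (hfin : IsFinitarization N M) :
    ((∃ P : Matroid α, P.E = M.E ∧
        ∀ S, P.Indep S ↔ N.Indep S ∧ ∃ T, M.Indep T ∧ T ⊆ S ∧ (S \ T).Finite) ↔
      (∀ F B, N.IsBase F → M.IsBase B → B ⊆ F → (F \ B).Finite)) ∧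
    ((∀ F B, N.IsBase F → M.IsBase B → B ⊆ F → (F \ B).Finite) →
      ∀ S, (N.Indep S ∧ ∃ T, M.Indep T ∧ T ⊆ S ∧ (S \ T).Finite) ↔ N.Indep S) := by
  constructor
  · constructor
    · -- (1) → (2)
      rintro ⟨P, hPE, hPindep⟩ F B hF hB hBF
      have hFE : F ⊆ P.E := (hF.subset_ground.trans_eq hfin.1).trans_eq hPE.symm
      have hBP : P.Indep B := (hPindep B).2
        ⟨indep_of_indep_aux hfin hB.indep, B, hB.indep, Subset.rfl, by simp⟩
      obtain ⟨B', hB', hBB'⟩ := hBP.subset_isBasis_of_subset hBF hFE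
      -- show `B' = F`
      have hB'F : B' = F := by
        refine hB'.subset.antisymm fun x hxF => ?_
        by_contra hxB'
        obtain ⟨hNB', T, hT, hTB', hfinB'T⟩ := (hPindep B').1 hB'.indep
        have : P.Indep (insert x B') := (hPindep _).2
          ⟨hF.indep.subset (insert_subset hxF hB'.subset), T, hT,
            hTB'.trans (subset_insert _ _),
            ((hfinB'T.insert x).subset fun y hy =>
              (mem_insert_iff.1 hy.1).imp id fun h => ⟨h, hy.2⟩)⟩
        exact hxB' (hB'.mem_of_insert_indep hxF this)
      obtain ⟨hNF, T, hT, hTF, hfinFT⟩ := (hPindep F).1 (hB'F ▸ hB'.indep)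
      obtain ⟨B'', hB'', hTB''⟩ := hT.exists_isBase_superset
      have h1 : (B \ B'').Finite := hfinFT.subset fun y hy =>
        ⟨hBF hy.1, fun h => hy.2 (hTB'' h)⟩
      have h2 : (B'' \ B).Finite := (hB''.diff_finite_comm hB).2 h1
      have h3 : (T \ B).Finite := h2.subset fun y (hy : y ∈ T \ B) => ⟨hTB'' hy.1, hy.2⟩
      refine (hfinFT.union h3).subset fun y hy => ?_
      by_cases hyT : y ∈ T
      · exact Or.inr ⟨hyT, hy.2⟩
      · exact Or.inl ⟨hy.1, hyT⟩
    · -- (2) → (1): take `P = N`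
      intro H
      refine ⟨N, hfin.1, fun S => ?_⟩
      exact ⟨fun h => ⟨h, nfin_indep_aux hfin H h⟩, fun h => h.1⟩
  · intro H S
    exact ⟨fun h => h.1, fun h => ⟨h, nfin_indep_aux hfin H h⟩⟩
end

section
/- If M is a nearly finitary matroid with finitarization N, then every independent set F of N contains an independent set S of M with F \ S finite (hence the near finitarization of M equals N). -/
/-- If `M` is a nearly finitary matroid with finitarization `N`, then every
`N`-independent set `F` contains an `M`-independent set `S` with `F \ S` finite. -/
theorem stmt_15 {α : Type*} (M N : Matroid α) (hfin : IsFinitarization N M)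
    (hnearly : ∀ F B, N.IsBase F → M.IsBase B → B ⊆ F → (F \ B).Finite) :
    ∀ F, N.Indep F → ∃ S, M.Indep S ∧ S ⊆ F ∧ (F \ S).Finite := by
  obtain ⟨hE, hIndep⟩ := hfin
  intro F hF
  -- extend `F` to a base `F'` of `N`
  obtain ⟨F', hF'base, hFF'⟩ := hF.exists_isBase_superset
  have hF'E : F' ⊆ M.E := hE ▸ hF'base.subset_ground
  -- take an `M`-basis `B` of `F'`
  obtain ⟨B, hB⟩ := M.exists_isBasis F' hF'E
  have hBindep : M.Indep B := hB.indep
  have hBF' : B ⊆ F' := hB.subset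
  -- `F'` is contained in the `M`-closure of `B`
  have hF'cl : F' ⊆ M.closure B := hB.subset_closure
  -- every finite subset of `F'` is `M`-independent
  have hfinsub : ∀ J ⊆ F', J.Finite → M.Indep J := by
    exact (hIndep F' hF'E).mp hF'base.indep
  -- `B` is spanning in `M`
  have hBspan : M.E ⊆ M.closure B := by
    intro y hy
    by_cases hyF' : y ∈ F'
    · exact hF'cl hyF'
    -- `insert y F'` is `N`-dependent
    have hdep : ¬ N.Indep (insert y F') :=
      (hF'base.insert_dep ⟨hE ▸ hy, hyF'⟩).not_indep
    have hins : insert y F' ⊆ M.E := Set.insert_subset hy hF'E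
    have := (hIndep (insert y F') hins).not.mp hdep
    push_neg at this
    obtain ⟨J, hJsub, hJfin, hJdep⟩ := this
    have hyJ : y ∈ J := by
      by_contra hyJ
      exact hJdep (hfinsub J (fun x hx => ((hJsub hx).resolve_left
        (fun h => hyJ (h ▸ hx)))) hJfin)
    have hJy : J \ {y} ⊆ F' := by
      rintro x ⟨hxJ, hxy⟩
      exact (hJsub hxJ).resolve_left hxy
    have hJyindep : M.Indep (J \ {y}) := hfinsub _ hJy hJfin.diff
    have hyclJ : y ∈ M.closure (J \ {y}) := by
      rw [hJyindep.mem_closure_iff]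
      left
      refine ⟨fun hind => hJdep (hind.subset ?_), Set.insert_subset hy (hJy.trans hF'E)⟩
      intro x hxJ
      by_cases hxy : x = y
      · exact hxy ▸ Set.mem_insert _ _
      · exact Set.mem_insert_of_mem _ ⟨hxJ, hxy⟩
    have : M.closure (J \ {y}) ⊆ M.closure B := by
      calc M.closure (J \ {y}) ⊆ M.closure (M.closure B) :=
            M.closure_subset_closure (hJy.trans hF'cl)
        _ = M.closure B := M.closure_closure B
    exact this hyclJ
  have hBbase : M.IsBase B := by
    refine hBindep.isBase_of_spanning ⟨subset_antisymm (M.closure_subset_ground B) hBspan,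
      hBindep.subset_ground⟩
  -- nearly finitary gives `F' \ B` finite
  have hfinite : (F' \ B).Finite := hnearly F' B hF'base hBbase hBF'
  refine ⟨B ∩ F, hBindep.subset Set.inter_subset_left, Set.inter_subset_right, ?_⟩
  refine hfinite.subset ?_
  rintro x ⟨hxF, hxBF⟩
  exact ⟨hFF' hxF, fun hxB => hxBF ⟨hxB, hxF⟩⟩
end

section
/- There exists a nearly finitary independence system on ℕ that is not k-nearly finitary for any k ∈ ℕ: there exists a family L of subsets of ℕ such that (i) L is downward closed and ∅ ∈ L; (ii) every finite subset of ℕ belongs to L (so the unique base of the finitarization of L is ℕ); (iii) every maximal element S of L (under inclusion) has finite complement in ℕ; and (iv) for every k ∈ ℕ there exists a maximal element S of L with k < (ℕ \ S).encard. (Concretely, one may take L = { S ⊆ ℕ : S is disjoint from some block T_n }, where T_1 = {1}, T_2 = {2,3}, T_3 = {4,5,6}, … partition ℕ into blocks of sizes 1, 2, 3, ….) -/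
/-- Blocks: `T n = [2^n, 2^n + (n+1))`, pairwise disjoint, of size `n+1`. -/
def Tblk (n : ℕ) : Set ℕ := Set.Ico (2^n) (2^n + (n+1))

lemma Tblk_disjoint {k m : ℕ} (h : k ≠ m) : Disjoint (Tblk k) (Tblk m) := by
  wlog hkm : k < m generalizing k m
  · exact (this h.symm (by omega)).symm
  refine Set.disjoint_left.2 fun x hx hx' => ?_
  simp only [Tblk, Set.mem_Ico] at hx hx'
  have h1 : k + 1 ≤ 2 ^ k := Nat.lt_two_pow_self (n := k)
  have h2 : 2 ^ (k+1) ≤ 2 ^ m := Nat.pow_le_pow_right (by norm_num) hkm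
  have : 2 ^ (k+1) = 2 ^ k + 2 ^ k := by ring
  omega

lemma Tblk_nonempty (n : ℕ) : (Tblk n).Nonempty := ⟨2^n, by simp [Tblk]⟩

lemma Tblk_encard (n : ℕ) : (Tblk n).encard = n + 1 := by
  have : Tblk n = ↑(Finset.Ico (2^n) (2^n + (n+1))) := by simp [Tblk]
  rw [this, Set.encard_coe_eq_coe_finsetCard, Nat.card_Ico]
  simp

/-- There exists a nearly finitary independence system on `ℕ` that is not
`k`-nearly finitary for any `k`: a downward-closed family `L` of subsets of `ℕ` containing
`∅` and all finite sets (so the unique base of its finitarization is `ℕ`), every maximal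
member of which has finite complement, but with maximal members of complement of
arbitrarily large cardinality. -/
theorem stmt_16 :
    ∃ L : Set (Set ℕ),
      (∅ ∈ L ∧ ∀ A B : Set ℕ, B ∈ L → A ⊆ B → A ∈ L) ∧
      (∀ S : Set ℕ, S.Finite → S ∈ L) ∧
      (∀ S : Set ℕ, Maximal (· ∈ L) S → (Set.univ \ S).Finite) ∧
      (∀ k : ℕ, ∃ S : Set ℕ, Maximal (· ∈ L) S ∧ (k : ℕ∞) < (Set.univ \ S).encard) := by
  refine ⟨{S | ∃ n, Disjoint S (Tblk n)}, ⟨⟨0, disjoint_bot_left⟩,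
    fun A B ⟨n, hn⟩ hAB => ⟨n, hn.mono_left hAB⟩⟩, ?_, ?_, ?_⟩
  · -- finite sets
    intro S hS
    obtain ⟨N, hN⟩ := hS.bddAbove
    refine ⟨N, Set.disjoint_left.2 fun x hx hx' => ?_⟩
    have hxN : x ≤ N := hN hx
    have : N < 2 ^ N := Nat.lt_two_pow_self (n := N)
    simp only [Tblk, Set.mem_Ico] at hx'
    omega
  · -- maximal members have finite complement
    rintro S ⟨⟨n, hn⟩, hmax⟩
    have hsub : S ⊆ (Tblk n)ᶜ := Set.disjoint_left.1 hn
    have : (Tblk n)ᶜ ⊆ S := hmax ⟨n, disjoint_compl_left⟩ hsub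
    have hS : S = (Tblk n)ᶜ := hsub.antisymm this
    rw [hS, Set.diff_eq, compl_compl, Set.univ_inter]
    exact Set.finite_Ico _ _
  · -- complements of arbitrary size
    intro k
    refine ⟨(Tblk k)ᶜ, ⟨⟨k, disjoint_compl_left⟩, ?_⟩, ?_⟩
    · rintro S' ⟨m, hm⟩ hsub
      rcases eq_or_ne m k with rfl | hmk
      · exact Set.disjoint_left.1 hm
      · exfalso
        have hTm : Tblk m ⊆ (Tblk k)ᶜ :=
          Set.subset_compl_iff_disjoint_right.2 (Tblk_disjoint hmk)
        obtain ⟨x, hx⟩ := Tblk_nonempty m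
        exact Set.disjoint_left.1 hm (hsub (hTm hx)) hx
    · rw [Set.diff_eq, compl_compl, Set.univ_inter, Tblk_encard]
      exact ENat.lt_add_one_iff (by simp) |>.2 le_rfl
end

section
/- For every n ∈ ℕ there exists a matroid M with finitarization N whose finitarization spectrum Spec(M) := { (F \ B).encard : F a base of N, B a base of M, B ⊆ F } is exactly {0, 1, …, n} ⊆ ℕ∞; in particular M is nearly finitary and its spectrum has size n + 1. (The paper realizes such M as the algebraic cycle matroid of n disjoint one-way infinite ladders.) -/
namespace S18

open Set

/-- Ground type: `inl (m, i)` is the spoke at level `i` of copy `m`;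
`inr (m, i)` is the path edge between levels `i` and `i+1` of copy `m`. -/
abbrev A (n : ℕ) : Type := (Fin n × ℕ) ⊕ (Fin n × ℕ)

variable {n : ℕ}

def sp (m : Fin n) (i : ℕ) : A n := Sum.inl (m, i)
def qe (m : Fin n) (i : ℕ) : A n := Sum.inr (m, i)

lemma sp_ne_qe (m m' : Fin n) (i i' : ℕ) : sp m i ≠ qe m' i' := by simp [sp, qe]

lemma sp_inj {m m' : Fin n} {i i' : ℕ} : sp m i = sp m' i' ↔ m = m' ∧ i = i' := by
  simp [sp, Prod.ext_iff]

lemma qe_inj {m m' : Fin n} {i i' : ℕ} : qe m i = qe m' i' ↔ m = m' ∧ i = i' := by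
  simp [qe, Prod.ext_iff]

/-- levels `i ≤ j` of copy `m` are joined by path edges inside `S`. -/
def Conn (S : Set (A n)) (m : Fin n) (i j : ℕ) : Prop :=
  ∀ k, i ≤ k → k < j → qe m k ∈ S

/-- A "cycle": two spokes at connected levels. -/
def Cfg (S : Set (A n)) : Prop :=
  ∃ m i j, i < j ∧ sp m i ∈ S ∧ sp m j ∈ S ∧ Conn S m i j

/-- Independence in the fan matroid. -/
def Ind (S : Set (A n)) : Prop := ¬ Cfg S

lemma Conn.mono {S T : Set (A n)} {m i j} (h : Conn S m i j) (hST : S ⊆ T) : Conn T m i j :=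
  fun k h1 h2 => hST (h k h1 h2)

lemma Ind.mono {S T : Set (A n)} (h : Ind T) (hST : S ⊆ T) : Ind S := by
  rintro ⟨m, i, j, hij, hi, hj, hc⟩
  exact h ⟨m, i, j, hij, hST hi, hST hj, hc.mono hST⟩

lemma conn_trans {S : Set (A n)} {m} {i j k : ℕ} (h1 : Conn S m i j) (h2 : Conn S m j k)
    (hij : i ≤ j) : Conn S m i k := by
  intro l h3 h4
  rcases lt_or_ge l j with h | h
  · exact h1 l h3 h
  · exact h2 l h h4

lemma conn_sub {S : Set (A n)} {m} {i j i' j' : ℕ} (h : Conn S m i j) (hi : i ≤ i')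
    (hj : j' ≤ j) : Conn S m i' j' :=
  fun l h3 h4 => h l (hi.trans h3) (h4.trans_le hj)

/-- Levels `i` and `j` lie in the same path-component of `S`. -/
def Same (S : Set (A n)) (m : Fin n) (i j : ℕ) : Prop :=
  (i ≤ j ∧ Conn S m i j) ∨ (j ≤ i ∧ Conn S m j i)

lemma Same.rfl {S : Set (A n)} {m i} : Same S m i i := Or.inl ⟨le_rfl, fun k h1 h2 => by omega⟩

lemma Same.symm {S : Set (A n)} {m i j} (h : Same S m i j) : Same S m j i := h.elim Or.inr Or.inl

lemma same_trans {S : Set (A n)} {m} {i j c : ℕ} (h1 : Same S m i c) (h2 : Same S m j c) :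
    Same S m i j := by
  rcases h1 with ⟨h1l, h1c⟩ | ⟨h1l, h1c⟩ <;> rcases h2 with ⟨h2l, h2c⟩ | ⟨h2l, h2c⟩
  · -- i ≤ c, j ≤ c
    rcases le_total i j with h | h
    · exact Or.inl ⟨h, conn_sub h1c le_rfl h2l⟩
    · exact Or.inr ⟨h, conn_sub h2c le_rfl h1l⟩
  · -- i ≤ c ≤ j
    exact Or.inl ⟨h1l.trans h2l, conn_trans h1c h2c h1l⟩
  · -- j ≤ c ≤ i
    exact Or.inr ⟨h2l.trans h1l, conn_trans h2c h1c h2l⟩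
  · -- c ≤ i, c ≤ j
    rcases le_total i j with h | h
    · exact Or.inl ⟨h, conn_sub h2c h1l le_rfl⟩
    · exact Or.inr ⟨h, conn_sub h1c h2l le_rfl⟩

/-- The finite bond around levels `[a, b]` of copy `m`. -/
def Bd (m : Fin n) (a b : ℕ) : Set (A n) :=
  {x | x = qe m b ∨ (∃ k, a ≤ k ∧ k ≤ b ∧ x = sp m k) ∨ (0 < a ∧ x = qe m (a - 1))}

lemma bd_finite (m : Fin n) (a b : ℕ) : (Bd m a b).Finite := by
  have : Bd m a b ⊆ (fun k => sp m k) '' (Iic b) ∪ {qe m b, qe m (a-1)} := by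
    rintro x (h | ⟨k, hk1, hk2, h⟩ | ⟨h0, h⟩)
    · exact Or.inr (by simp [h])
    · exact Or.inl ⟨k, hk2, h.symm⟩
    · exact Or.inr (by simp [h])
  exact Finite.subset (((finite_Iic b).image _).union (by simp)) this

def NoBond (S : Set (A n)) : Prop := ∀ m a b, a ≤ b → ¬ Bd m a b ⊆ S

lemma NoBond.mono {S T : Set (A n)} (h : NoBond T) (hST : S ⊆ T) : NoBond S :=
  fun m a b hab hsub => h m a b hab (hsub.trans hST)

/-! ### Linear algebra: the representation of the fan matroid -/

noncomputable def phi : A n → ((Fin n × ℕ) →₀ ℚ)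
  | Sum.inl l => Finsupp.single l 1
  | Sum.inr (m, i) => Finsupp.single (m, i) 1 - Finsupp.single (m, i + 1) 1

lemma phi_sp (m : Fin n) (i : ℕ) : phi (sp m i) = Finsupp.single (m, i) 1 := rfl

lemma phi_qe (m : Fin n) (i : ℕ) :
    phi (qe m i) = Finsupp.single (m, i) 1 - Finsupp.single (m, i + 1) 1 := rfl

lemma sum_phi_qe (m : Fin n) (a b : ℕ) (hab : a ≤ b) :
    ∑ k ∈ Finset.Ico a b, phi (qe m k) =
      Finsupp.single (m, a) 1 - Finsupp.single (m, b) (1 : ℚ) := by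
  have h := Finset.sum_range_sub' (f := fun j => Finsupp.single (m, a + j) (1 : ℚ)) (n := b - a)
  rw [Finset.sum_Ico_eq_sum_range]
  have heq : ∀ j : ℕ, phi (qe m (a + j)) =
      Finsupp.single (m, a + j) (1 : ℚ) - Finsupp.single (m, a + (j + 1)) 1 := by
    intro j
    rw [phi_qe, Nat.add_assoc]
  rw [Finset.sum_congr rfl fun j _ => heq j, h, Nat.add_zero, Nat.add_sub_cancel' hab]

lemma phi_rel (m : Fin n) (a b : ℕ) (hab : a < b) :
    phi (sp m a) = phi (sp m b) + ∑ k ∈ Finset.Ico a b, phi (qe m k) := by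
  rw [sum_phi_qe m a b hab.le, phi_sp, phi_sp]
  abel

lemma ind_li {S : Set (A n)} (hS : Ind S) :
    LinearIndependent ℚ (fun x : S => phi x.1) := by
  classical
  have hrw : (fun x : S => phi x.1) = phi ∘ (Subtype.val : S → A n) := rfl
  rw [hrw, linearIndependent_comp_subtype_iff, linearIndepOn_iff]
  intro l hl htot
  rw [Finsupp.mem_supported] at hl
  have coordEq : ∀ c : Fin n × ℕ, (∑ x ∈ l.support, l x * (phi x) c) = 0 := by
    intro c
    have h := congrArg (fun F : (Fin n × ℕ) →₀ ℚ => F c) htot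
    simp only [Finsupp.linearCombination_apply, Finsupp.coe_zero, Pi.zero_apply] at h
    rw [Finsupp.sum_apply] at h
    simpa [Finsupp.sum, Finsupp.smul_apply, smul_eq_mul] using h
  have hsum_single : ∀ g : A n, (∑ x ∈ l.support, if x = g then l x else 0) = l g := by
    intro g
    rw [Finset.sum_ite_eq' l.support g (fun x => l x)]
    split_ifs with h
    · rfl
    · exact (Finsupp.notMem_support_iff.1 h).symm
  have hphi0 : ∀ (m : Fin n) (x : A n), (phi x) (m, 0) =
      (if x = sp m 0 then (1 : ℚ) else 0) + (if x = qe m 0 then 1 else 0) := by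
    rintro m (⟨m', i⟩ | ⟨m', i⟩) <;>
      simp [phi, Finsupp.single_apply, sp, qe, Prod.ext_iff, @eq_comm _ m' m, @eq_comm _ i 0]
  have hphiS : ∀ (m : Fin n) (i : ℕ) (x : A n), (phi x) (m, i + 1) =
      (if x = sp m (i + 1) then (1 : ℚ) else 0) + (if x = qe m (i + 1) then 1 else 0)
        - (if x = qe m i then 1 else 0) := by
    rintro m i (⟨m', j⟩ | ⟨m', j⟩) <;>
      simp [phi, Finsupp.single_apply, sp, qe, Prod.ext_iff, @eq_comm _ m' m,
        @eq_comm _ j (i + 1), @eq_comm _ j i]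
  have eq0 : ∀ m : Fin n, l (sp m 0) + l (qe m 0) = 0 := by
    intro m
    have h := coordEq (m, 0)
    have hc : ∑ x ∈ l.support, l x * (phi x) (m, 0) = ∑ x ∈ l.support,
        ((if x = sp m 0 then l x else 0) + (if x = qe m 0 then l x else 0)) := by
      refine Finset.sum_congr rfl fun x _ => ?_
      rw [hphi0 m x]
      simp [mul_add, mul_ite]
    have h2 : ∑ x ∈ l.support, ((if x = sp m 0 then l x else 0)
        + (if x = qe m 0 then l x else 0)) = 0 := by rw [← hc]; exact h
    rwa [Finset.sum_add_distrib, hsum_single, hsum_single] at h2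
  have eqS : ∀ (m : Fin n) (i : ℕ), l (sp m (i + 1)) + l (qe m (i + 1)) - l (qe m i) = 0 := by
    intro m i
    have h := coordEq (m, i + 1)
    have hc : ∑ x ∈ l.support, l x * (phi x) (m, i + 1) = ∑ x ∈ l.support,
        ((if x = sp m (i + 1) then l x else 0)
        + (if x = qe m (i + 1) then l x else 0) - (if x = qe m i then l x else 0)) := by
      refine Finset.sum_congr rfl fun x _ => ?_
      rw [hphiS m i x]
      simp [mul_add, mul_sub, mul_ite]
    have h2 : ∑ x ∈ l.support, ((if x = sp m (i + 1) then l x else 0)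
        + (if x = qe m (i + 1) then l x else 0) - (if x = qe m i then l x else 0)) = 0 := by
      rw [← hc]; exact h
    rwa [Finset.sum_sub_distrib, Finset.sum_add_distrib, hsum_single, hsum_single,
      hsum_single] at h2
  have hg : ∀ (m : Fin n) (i : ℕ),
      l (qe m i) = -∑ k ∈ Finset.range (i + 1), l (sp m k) := by
    intro m i
    induction i with
    | zero => have := eq0 m; rw [Finset.sum_range_one]; linarith
    | succ i ih =>
        have h1 := eqS m i
        rw [Finset.sum_range_succ]
        linarith [ih]
  set lev : A n → ℕ := Sum.elim Prod.snd Prod.snd with hlev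
  set Nb : ℕ := l.support.sup lev + 1 with hNb
  have hbig : ∀ x : A n, l x ≠ 0 → lev x < Nb :=
    fun x hx => lt_of_le_of_lt (Finset.le_sup (Finsupp.mem_support_iff.2 hx)) (Nat.lt_succ_self _)
  have hsp0 : ∀ (m : Fin n) (i : ℕ), l (sp m i) = 0 := by
    intro m i
    by_contra hne
    set Asup : Finset ℕ := (Finset.range (Nb + 1)).filter (fun k => l (sp m k) ≠ 0) with hAsup
    have hmemA : ∀ k, k ∈ Asup ↔ k < Nb + 1 ∧ l (sp m k) ≠ 0 := by
      intro k; simp [hAsup]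
    have hiA : i ∈ Asup := by
      rw [hmemA]
      exact ⟨(hbig _ hne).trans (Nat.lt_succ_self _), hne⟩
    have hAne : Asup.Nonempty := ⟨i, hiA⟩
    set a : ℕ := Asup.min' hAne with ha
    have haA : a ∈ Asup := Asup.min'_mem hAne
    have hqNb : l (qe m Nb) = 0 := by
      by_contra h
      have := hbig _ h
      simp [hlev, qe] at this
    have htotal : ∑ k ∈ Finset.range (Nb + 1), l (sp m k) = 0 := by
      have := hg m Nb
      rw [hqNb] at this
      linarith
    have hsumA : ∑ k ∈ Asup, l (sp m k) = 0 := by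
      rw [hAsup, Finset.sum_filter_ne_zero, htotal]
    have hex2 : ∃ b ∈ Asup, a < b := by
      by_contra hno
      push_neg at hno
      have hsing : Asup = {a} := by
        apply Finset.eq_singleton_iff_unique_mem.2
        exact ⟨haA, fun k hk => le_antisymm (hno k hk) (Asup.min'_le k hk)⟩
      rw [hsing, Finset.sum_singleton] at hsumA
      exact ((hmemA a).1 haA).2 hsumA
    set Bsup : Finset ℕ := Asup.filter (fun k => a < k) with hBsup
    have hBne : Bsup.Nonempty := by
      obtain ⟨b, hb1, hb2⟩ := hex2
      exact ⟨b, by simp [hBsup, hb1, hb2]⟩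
    set b : ℕ := Bsup.min' hBne with hb
    have hbB : b ∈ Bsup := Bsup.min'_mem hBne
    have hbA : b ∈ Asup := (Finset.mem_filter.1 hbB).1
    have hab : a < b := (Finset.mem_filter.1 hbB).2
    have hqmid : ∀ k, a ≤ k → k < b → l (qe m k) = -l (sp m a) := by
      intro k h1 h2
      rw [hg m k]
      congr 1
      refine Finset.sum_eq_single_of_mem a (Finset.mem_range.2 (by omega)) ?_
      intro j hj hja
      by_contra hjne
      have hjA : j ∈ Asup := by
        rw [hmemA]
        constructor
        · have := Finset.mem_range.1 hj
          have hbNb : b < Nb + 1 := (hmemA b).1 hbA |>.1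
          omega
        · exact hjne
      have haj : a < j := lt_of_le_of_ne (Asup.min'_le j hjA) (Ne.symm hja)
      have : b ≤ j := Bsup.min'_le j (by simp [hBsup, hjA, haj])
      have := Finset.mem_range.1 hj
      omega
    refine hS ⟨m, a, b, hab, ?_, ?_, ?_⟩
    · exact hl (Finsupp.mem_support_iff.2 ((hmemA a).1 haA).2)
    · exact hl (Finsupp.mem_support_iff.2 ((hmemA b).1 hbA).2)
    · intro k h1 h2
      refine hl (Finsupp.mem_support_iff.2 ?_)
      rw [hqmid k h1 h2]
      simpa using ((hmemA a).1 haA).2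
  have hqe0 : ∀ (m : Fin n) (i : ℕ), l (qe m i) = 0 := by
    intro m i
    rw [hg m i]
    simp [hsp0]
  ext x
  rcases x with ⟨m, i⟩ | ⟨m, i⟩
  · exact hsp0 m i
  · exact hqe0 m i

lemma mem_span_of_cfg {I : Set (A n)} (hI : Ind I) {x : A n} (hx : ¬ Ind (insert x I)) :
    phi x ∈ Submodule.span ℚ (phi '' I) := by
  classical
  rw [Ind, not_not] at hx
  obtain ⟨m, a, b, hab, ha, hb, hconn⟩ := hx
  rw [mem_insert_iff] at ha hb
  by_cases hq : ∀ k, a ≤ k → k < b → qe m k ∈ I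
  · have hsum : ∑ k ∈ Finset.Ico a b, phi (qe m k) ∈ Submodule.span ℚ (phi '' I) :=
      Submodule.sum_mem _ fun k hk => Submodule.subset_span
        ⟨_, hq k (Finset.mem_Ico.1 hk).1 (Finset.mem_Ico.1 hk).2, rfl⟩
    rcases ha with ha | haI
    · rcases hb with hb | hbI
      · rw [← hb] at ha
        exact absurd (sp_inj.1 ha).2 (by omega)
      · rw [← ha, phi_rel m a b hab]
        exact Submodule.add_mem _ (Submodule.subset_span ⟨_, hbI, rfl⟩) hsum
    · rcases hb with hb | hbI
      · rw [← hb]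
        have : phi (sp m b) = phi (sp m a) - ∑ k ∈ Finset.Ico a b, phi (qe m k) := by
          rw [phi_rel m a b hab]; abel
        rw [this]
        exact Submodule.sub_mem _ (Submodule.subset_span ⟨_, haI, rfl⟩) hsum
      · exact absurd ⟨m, a, b, hab, haI, hbI, fun k h1 h2 => hq k h1 h2⟩ hI
  · push_neg at hq
    obtain ⟨k₀, hk₀1, hk₀2, hk₀I⟩ := hq
    have hk₀x : qe m k₀ = x := by
      rcases hconn k₀ hk₀1 hk₀2 with h | h
      · exact h
      · exact absurd h hk₀I
    have haI : sp m a ∈ I := by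
      rcases ha with ha | h
      · rw [← hk₀x] at ha; exact absurd ha (sp_ne_qe m m a k₀)
      · exact h
    have hbI : sp m b ∈ I := by
      rcases hb with hb | h
      · rw [← hk₀x] at hb; exact absurd hb (sp_ne_qe m m b k₀)
      · exact h
    have hqI : ∀ k ∈ (Finset.Ico a b).erase k₀, qe m k ∈ I := by
      intro k hk
      obtain ⟨hkne, hk⟩ := Finset.mem_erase.1 hk
      rcases hconn k (Finset.mem_Ico.1 hk).1 (Finset.mem_Ico.1 hk).2 with h | h
      · rw [← hk₀x] at h
        exact absurd (qe_inj.1 h).2 hkne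
      · exact h
    have hmem : k₀ ∈ Finset.Ico a b := Finset.mem_Ico.2 ⟨hk₀1, hk₀2⟩
    have hsplit : phi (qe m k₀) + ∑ k ∈ (Finset.Ico a b).erase k₀, phi (qe m k)
        = ∑ k ∈ Finset.Ico a b, phi (qe m k) := Finset.add_sum_erase _ _ hmem
    have : phi (qe m k₀) = phi (sp m a) - phi (sp m b)
        - ∑ k ∈ (Finset.Ico a b).erase k₀, phi (qe m k) := by
      have hr := phi_rel m a b hab
      rw [← hsplit] at hr
      rw [hr]
      abel
    rw [← hk₀x, this]
    exact Submodule.sub_mem _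
      (Submodule.sub_mem _ (Submodule.subset_span ⟨_, haI, rfl⟩)
        (Submodule.subset_span ⟨_, hbI, rfl⟩))
      (Submodule.sum_mem _ fun k hk => Submodule.subset_span ⟨_, hqI k hk, rfl⟩)

lemma ind_aug {I J : Set (A n)} (hI : Ind I) (hIfin : I.Finite) (hJ : Ind J)
    (hJfin : J.Finite) (hcard : I.ncard < J.ncard) :
    ∃ e ∈ J, e ∉ I ∧ Ind (insert e I) := by
  classical
  by_contra hcon
  push_neg at hcon
  have hspan : ∀ e ∈ J, phi e ∈ Submodule.span ℚ (phi '' I) := by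
    intro e he
    by_cases heI : e ∈ I
    · exact Submodule.subset_span ⟨e, heI, rfl⟩
    · exact mem_span_of_cfg hI (hcon e he heI)
  haveI : FiniteDimensional ℚ (Submodule.span ℚ (phi '' I)) :=
    FiniteDimensional.span_of_finite ℚ (hIfin.image phi)
  set W := Submodule.span ℚ (phi '' I) with hW
  have hli := ind_li hJ
  let v : J → W := fun x => ⟨phi x.1, hspan x.1 x.2⟩
  have hliv : LinearIndependent ℚ v := by
    have hcomp : (fun x : J => phi x.1) = (W.subtype) ∘ v := rfl
    rw [hcomp] at hli
    exact hli.of_comp W.subtype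
  haveI : Fintype J := hJfin.fintype
  have h1 : Fintype.card J ≤ Module.finrank ℚ W := hliv.fintype_card_le_finrank
  have h2 : Module.finrank ℚ W ≤ I.ncard := by
    haveI : Fintype (phi '' I) := (hIfin.image phi).fintype
    refine (finrank_span_le_card (R := ℚ) (phi '' I)).trans ?_
    rw [← Set.ncard_eq_toFinset_card']
    exact Set.ncard_image_le hIfin
  have h3 : J.ncard = Fintype.card J := by
    rw [Set.ncard_eq_toFinset_card', Set.toFinset_card]
  omega

/-! ### The fan matroid and its dual -/

lemma ind_compact (I : Set (A n)) (h : ∀ J, J ⊆ I → J.Finite → Ind J) : Ind I := by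
  rintro ⟨m, i, j, hij, hi, hj, hc⟩
  refine h ({sp m i, sp m j} ∪ (fun k => qe m k) '' (Ico i j)) ?_ ?_ ?_
  · rintro x (h | ⟨k, hk, rfl⟩)
    · rcases h with rfl | rfl; exact hi; exact hj
    · exact hc k hk.1 hk.2
  · exact (by simp : ({sp m i, sp m j} : Set (A n)).Finite).union ((finite_Ico i j).image _)
  · exact ⟨m, i, j, hij, by simp, by simp, fun k h1 h2 => Or.inr ⟨k, ⟨h1, h2⟩, rfl⟩⟩

noncomputable def K (n : ℕ) : Matroid (A n) :=
  (IndepMatroid.ofFinitaryCardAugment univ Ind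
    (by rintro ⟨m, i, j, _, h, _⟩; exact h.elim)
    (fun I J hJ hIJ => hJ.mono hIJ)
    (fun I J hI hIfin hJ hJfin hcard => ind_aug hI hIfin hJ hJfin hcard)
    ind_compact
    (fun I _ => subset_univ I)).matroid

lemma K_indep {S : Set (A n)} : (K n).Indep S ↔ Ind S := Iff.rfl

lemma K_E : (K n).E = univ := rfl

lemma base_iff_of_indep {α : Type*} {M : Matroid α} (hE : M.E = univ) {P : Set α → Prop}
    (h : ∀ S, M.Indep S ↔ P S) (hmono : ∀ S T, P T → S ⊆ T → P S) {B : Set α} :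
    M.IsBase B ↔ P B ∧ ∀ x, x ∉ B → ¬ P (insert x B) := by
  constructor
  · intro hB
    refine ⟨(h B).1 hB.indep, fun x hx hPx => hx ?_⟩
    have heq := hB.eq_of_subset_indep ((h _).2 hPx) (subset_insert x B)
    rw [heq]; exact mem_insert _ _
  · rintro ⟨hPB, hmax⟩
    refine ((h B).2 hPB).isBase_of_maximal fun J hJ hBJ => ?_
    by_contra hne
    obtain ⟨x, hxJ, hxB⟩ := exists_of_ssubset (hBJ.ssubset_of_ne hne)
    exact hmax x hxB (hmono _ _ ((h J).1 hJ) (insert_subset hxJ hBJ))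

lemma K_base_iff {T : Set (A n)} :
    (K n).IsBase T ↔ Ind T ∧ ∀ x, x ∉ T → ¬ Ind (insert x T) :=
  base_iff_of_indep K_E (fun _ => Iff.rfl) (fun _ _ h hsub => h.mono hsub)

noncomputable def M (n : ℕ) : Matroid (A n) := (K n)✶

lemma M_E : (M n).E = univ := rfl

lemma M_base_iff {B : Set (A n)} : (M n).IsBase B ↔ (K n).IsBase (univ \ B) := by
  rw [M, Matroid.dual_isBase_iff (by simp [K_E])]; rfl

lemma M_indep_iff {X : Set (A n)} :
    (M n).Indep X ↔ ∃ B, (K n).IsBase B ∧ Disjoint X B := by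
  rw [M, Matroid.dual_indep_iff_exists (by simp [K_E])]

/-! ### Structure of bases of `K` -/

lemma conn_insert_sp {T : Set (A n)} {m : Fin n} {i j : ℕ} {m' : Fin n} {i' : ℕ}
    (h : Conn (insert (sp m' i') T) m i j) : Conn T m i j := by
  intro k h1 h2
  rcases h k h1 h2 with h | h
  · exact absurd h.symm (sp_ne_qe _ _ _ _)
  · exact h

/-- Bases of `K` have a spoke in every component. -/
lemma base_spoke {T : Set (A n)} (hT : (K n).IsBase T) (m : Fin n) (i : ℕ) :
    ∃ c, Same T m i c ∧ sp m c ∈ T := by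
  obtain ⟨hInd, hmax⟩ := K_base_iff.1 hT
  by_cases hi : sp m i ∈ T
  · exact ⟨i, Same.rfl, hi⟩
  by_contra hno
  push_neg at hno
  apply hmax (sp m i) hi
  rintro ⟨m', a, b, hab, ha, hb, hc⟩
  have hcT : Conn T m' a b := conn_insert_sp hc
  rw [mem_insert_iff] at ha hb
  rcases ha with ha | haT
  · obtain ⟨rfl, rfl⟩ := sp_inj.1 ha
    rcases hb with hb | hbT
    · obtain ⟨-, h2⟩ := sp_inj.1 hb
      omega
    · exact hno b (Or.inl ⟨hab.le, hcT⟩) hbT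
  · rcases hb with hb | hbT
    · obtain ⟨rfl, rfl⟩ := sp_inj.1 hb
      exact hno a (Or.inr ⟨hab.le, hcT⟩) haT
    · exact hInd ⟨m', a, b, hab, haT, hbT, hcT⟩

/-- Uniqueness of the spoke in each component. -/
lemma base_spoke_unique {T : Set (A n)} (hT : (K n).IsBase T) {m : Fin n} {c c' : ℕ}
    (hc : sp m c ∈ T) (hc' : sp m c' ∈ T) (hs : Same T m c c') : c = c' := by
  by_contra hne
  have hInd : Ind T := (K_base_iff.1 hT).1
  rcases hs with ⟨hle, hconn⟩ | ⟨hle, hconn⟩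
  · exact hInd ⟨m, c, c', lt_of_le_of_ne hle hne, hc, hc', hconn⟩
  · exact hInd ⟨m, c', c, lt_of_le_of_ne hle (Ne.symm hne), hc', hc, hconn⟩

/-! ### `M.Indep` on finite sets equals `NoBond` -/

lemma M_indep_noBond {X : Set (A n)} (hX : (M n).Indep X) : NoBond X := by
  obtain ⟨B, hB, hdisj⟩ := M_indep_iff.1 hX
  intro m a b hab hsub
  obtain ⟨hInd, hmax⟩ := K_base_iff.1 hB
  have hnotB : ∀ z ∈ Bd m a b, z ∉ B := fun z hz hzB =>
    (Set.disjoint_left.1 hdisj (hsub hz)) hzB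
  have hspa : sp m a ∉ B := hnotB _ (Or.inr (Or.inl ⟨a, le_rfl, hab, rfl⟩))
  apply hmax (sp m a) hspa
  rintro ⟨m', i, j, hij, hi, hj, hc⟩
  have hcT : Conn B m' i j := conn_insert_sp hc
  rw [mem_insert_iff] at hi hj
  rcases hi with hi | hiB
  · obtain ⟨hm, hia⟩ := sp_inj.1 hi
    subst hm
    rcases hj with hj | hjB
    · obtain ⟨-, h2⟩ := sp_inj.1 hj
      omega
    · by_cases hjb : j ≤ b
      · exact hnotB _ (Or.inr (Or.inl ⟨j, by omega, hjb, rfl⟩)) hjB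
      · exact hnotB _ (Or.inl rfl) (hcT b (by omega) (by omega))
  · rcases hj with hj | hjB
    · obtain ⟨hm, hja⟩ := sp_inj.1 hj
      subst hm
      exact hnotB _ (Or.inr (Or.inr ⟨by omega, rfl⟩)) (hcT (a - 1) (by omega) (by omega))
    · exact hInd ⟨m', i, j, hij, hiB, hjB, hcT⟩

lemma nat_least {P : ℕ → Prop} (h : ∃ k, P k) : ∃ k, P k ∧ ∀ j, j < k → ¬ P j := by
  classical
  exact ⟨Nat.find h, Nat.find_spec h, fun j hj => Nat.find_min h hj⟩

lemma noBond_M_indep {J : Set (A n)} (hJfin : J.Finite) (hnb : NoBond J) : (M n).Indep J := by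
  classical
  set Yc : Set (A n) := Jᶜ with hYc
  have hqYc : ∀ (m : Fin n) (k : ℕ), qe m k ∈ Yc ↔ qe m k ∉ J := fun _ _ => Iff.rfl
  -- least available spoke predicate
  set LA : Fin n → ℕ → Prop :=
    fun m c => sp m c ∈ Yc ∧ ∀ j, j < c → Same Yc m j c → sp m j ∉ Yc with hLA
  have exAvail : ∀ (m : Fin n) (i : ℕ), ∃ c, Same Yc m i c ∧ sp m c ∈ Yc := by
    intro m i
    by_contra hno
    push_neg at hno
    have hbex : ∃ b, i ≤ b ∧ qe m b ∈ J := by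
      by_contra hbex
      push_neg at hbex
      have hsame : ∀ j, i ≤ j → Same Yc m i j :=
        fun j hj => Or.inl ⟨hj, fun k h1 _ => hbex k h1⟩
      have hspJ : ∀ j, i ≤ j → sp m j ∈ J := by
        intro j hj
        by_contra hsp
        exact hno j (hsame j hj) hsp
      have hinf : ((fun j => sp m j) '' (Ici i)).Infinite :=
        (Set.Ici_infinite i).image (fun x _ y _ h => (sp_inj.1 h).2)
      exact hinf (hJfin.subset (by rintro z ⟨j, hj, rfl⟩; exact hspJ j hj))
    obtain ⟨b₀, ⟨hib, hqb⟩, hbmin⟩ := nat_least hbex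
    have hconn_ib : Conn Yc m i b₀ := by
      intro k h1 h2
      intro hk
      exact hbmin k h2 ⟨h1, hk⟩
    have haex : ∃ a, Conn Yc m a i := ⟨i, fun k h1 h2 => absurd h2 (by omega)⟩
    obtain ⟨a₀, ha₀, hamin⟩ := nat_least haex
    have ha₀i : a₀ ≤ i := by
      by_contra h
      exact hamin i (by omega) (fun k h1 h2 => absurd h2 (by omega))
    have hbdry : 0 < a₀ → qe m (a₀ - 1) ∈ J := by
      intro hpos
      by_contra hq
      refine hamin (a₀ - 1) (by omega) ?_
      intro k h1 h2
      rcases Nat.eq_or_lt_of_le h1 with h | h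
      · rwa [← h]
      · exact ha₀ k (by omega) h2
    have hspokes : ∀ k, a₀ ≤ k → k ≤ b₀ → sp m k ∈ J := by
      intro k h1 h2
      by_contra hsp
      refine hno k ?_ hsp
      rcases le_total k i with h | h
      · exact Or.inr ⟨h, conn_sub ha₀ h1 le_rfl⟩
      · exact Or.inl ⟨h, conn_sub hconn_ib le_rfl h2⟩
    refine hnb m a₀ b₀ (by omega) ?_
    rintro z (rfl | ⟨k, hk1, hk2, rfl⟩ | ⟨hpos, rfl⟩)
    · exact hqb
    · exact hspokes k hk1 hk2
    · exact hbdry hpos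
  have exLeast : ∀ (m : Fin n) (i : ℕ), ∃ c, Same Yc m i c ∧ LA m c := by
    intro m i
    obtain ⟨c₀, hc₀, hcmin⟩ := nat_least (exAvail m i)
    refine ⟨c₀, hc₀.1, hc₀.2, fun j hj hsame hspj => ?_⟩
    exact hcmin j hj ⟨same_trans hc₀.1 hsame, hspj⟩
  set GB : Set (A n) := {x | ∃ m c, x = sp m c ∧ LA m c} ∪
    {x | ∃ m k, x = qe m k ∧ qe m k ∉ J} with hGB
  have hmem_sp : ∀ (m : Fin n) (c : ℕ), sp m c ∈ GB ↔ LA m c := by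
    intro m c
    simp only [hGB, mem_union, mem_setOf_eq]
    constructor
    · rintro (⟨m', c', heq, h⟩ | ⟨m', k', heq, h⟩)
      · obtain ⟨rfl, rfl⟩ := sp_inj.1 heq; exact h
      · exact absurd heq (sp_ne_qe _ _ _ _)
    · intro h; exact Or.inl ⟨m, c, rfl, h⟩
  have hmem_qe : ∀ (m : Fin n) (k : ℕ), qe m k ∈ GB ↔ qe m k ∉ J := by
    intro m k
    simp only [hGB, mem_union, mem_setOf_eq]
    constructor
    · rintro (⟨m', c', heq, h⟩ | ⟨m', k', heq, h⟩)
      · exact absurd heq.symm (sp_ne_qe _ _ _ _)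
      · obtain ⟨rfl, rfl⟩ := qe_inj.1 heq; exact h
    · intro h; exact Or.inr ⟨m, k, rfl, h⟩
  have hconnGB : ∀ (m : Fin n) (i j : ℕ), Conn GB m i j ↔ Conn Yc m i j := by
    intro m i j
    constructor
    · exact fun h k h1 h2 => (hmem_qe m k).1 (h k h1 h2)
    · exact fun h k h1 h2 => (hmem_qe m k).2 (h k h1 h2)
  have hIndGB : Ind GB := by
    rintro ⟨m, i, j, hij, hi, hj, hc⟩
    have hLAi := (hmem_sp m i).1 hi
    have hLAj := (hmem_sp m j).1 hj
    exact hLAj.2 i hij (Or.inl ⟨hij.le, (hconnGB m i j).1 hc⟩) hLAi.1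
  have hmaxGB : ∀ x, x ∉ GB → ¬ Ind (insert x GB) := by
    rintro (⟨m, i⟩ | ⟨m, k⟩) hx hIndIns
    · -- x is a spoke, not least-available
      obtain ⟨c, hSame, hLAc⟩ := exLeast m i
      have hci : c ≠ i := fun h => hx ((hmem_sp m i).2 (h ▸ hLAc))
      have hspc : sp m c ∈ GB := (hmem_sp m c).2 hLAc
      rcases hSame with ⟨hle, hconn⟩ | ⟨hle, hconn⟩
      · refine hIndIns ⟨m, i, c, lt_of_le_of_ne hle (Ne.symm hci), mem_insert _ _,
          mem_insert_of_mem _ hspc, ?_⟩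
        intro k h1 h2
        exact mem_insert_of_mem _ ((hmem_qe m k).2 (hconn k h1 h2))
      · refine hIndIns ⟨m, c, i, lt_of_le_of_ne hle hci, mem_insert_of_mem _ hspc,
          mem_insert _ _, ?_⟩
        intro k h1 h2
        exact mem_insert_of_mem _ ((hmem_qe m k).2 (hconn k h1 h2))
    · -- x is a path edge in J
      have hkJ : qe m k ∈ J := by
        by_contra h
        exact hx ((hmem_qe m k).2 h)
      obtain ⟨c₁, hS₁, hLA₁⟩ := exLeast m k
      obtain ⟨c₂, hS₂, hLA₂⟩ := exLeast m (k + 1)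
      have hc₁k : c₁ ≤ k := by
        by_contra h
        rcases hS₁ with ⟨hle, hconn⟩ | ⟨hle, hconn⟩
        · exact (hconn k le_rfl (by omega)) hkJ
        · omega
      have hc₂k : k + 1 ≤ c₂ := by
        by_contra h
        rcases hS₂ with ⟨hle, hconn⟩ | ⟨hle, hconn⟩
        · omega
        · exact (hconn k (by omega) (by omega)) hkJ
      have hconn₁ : Conn Yc m c₁ k := by
        rcases hS₁ with ⟨hle, hconn⟩ | ⟨hle, hconn⟩
        · rcases Nat.eq_or_lt_of_le hle with h | h
          · rw [h]; exact fun k' h1 h2 => absurd h2 (by omega)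
          · omega
        · exact hconn
      have hconn₂ : Conn Yc m (k + 1) c₂ := by
        rcases hS₂ with ⟨hle, hconn⟩ | ⟨hle, hconn⟩
        · exact hconn
        · rcases Nat.eq_or_lt_of_le hle with h | h
          · rw [← h]; exact fun k' h1 h2 => absurd h2 (by omega)
          · omega
      refine hIndIns ⟨m, c₁, c₂, by omega, mem_insert_of_mem _ ((hmem_sp m c₁).2 hLA₁),
        mem_insert_of_mem _ ((hmem_sp m c₂).2 hLA₂), ?_⟩
      intro k' h1 h2
      rcases lt_trichotomy k' k with h | h | h
      · exact mem_insert_of_mem _ ((hmem_qe m k').2 (hconn₁ k' h1 h))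
      · rw [h]; exact mem_insert _ _
      · exact mem_insert_of_mem _ ((hmem_qe m k').2 (hconn₂ k' (by omega) h2))
  have hbase : (K n).IsBase GB := K_base_iff.2 ⟨hIndGB, hmaxGB⟩
  refine M_indep_iff.2 ⟨GB, hbase, Set.disjoint_left.2 ?_⟩
  rintro z hzJ (⟨m, c, rfl, hLAc⟩ | ⟨m, k, rfl, h⟩)
  · exact hLAc.1 hzJ
  · exact h hzJ

/-! ### The finitarization -/

noncomputable def N (n : ℕ) : Matroid (A n) :=
  (IndepMatroid.ofFinitaryCardAugment univ (fun S => ∀ J, J ⊆ S → J.Finite → (M n).Indep J)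
    (fun J hJ _ => by rw [subset_empty_iff] at hJ; simp [hJ])
    (fun I J hJ hIJ K hKI hKfin => hJ K (hKI.trans hIJ) hKfin)
    (by
      intro I J hI hIfin hJ hJfin hcard
      have hMI : (M n).Indep I := hI I Subset.rfl hIfin
      have hMJ : (M n).Indep J := hJ J Subset.rfl hJfin
      have henc : I.encard < J.encard := by
        rw [hIfin.encard_eq_coe_toFinset_card, hJfin.encard_eq_coe_toFinset_card]
        rw [Set.ncard_eq_toFinset_card _ hIfin, Set.ncard_eq_toFinset_card _ hJfin] at hcard
        exact_mod_cast hcard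
      obtain ⟨e, he, hins⟩ := hMI.augment hMJ henc
      exact ⟨e, he.1, he.2, fun K hK _ => hins.subset hK⟩)
    (fun I h J hJI hJfin => h J hJI hJfin J Subset.rfl hJfin)
    (fun I _ => subset_univ I)).matroid

lemma N_E : (N n).E = univ := rfl

lemma N_indep_iff {S : Set (A n)} :
    (N n).Indep S ↔ ∀ J, J ⊆ S → J.Finite → (M n).Indep J := Iff.rfl

lemma isFin : IsFinitarization (N n) (M n) := ⟨rfl, fun _ _ => Iff.rfl⟩

lemma N_indep_noBond_iff {S : Set (A n)} : (N n).Indep S ↔ NoBond S := by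
  rw [N_indep_iff]
  constructor
  · intro h m a b hab hsub
    have hfin := bd_finite m a b
    have := M_indep_noBond (h _ hsub hfin)
    exact this m a b hab Subset.rfl
  · intro h J hJS hJfin
    exact noBond_M_indep hJfin (h.mono hJS)

lemma N_base_iff {F : Set (A n)} :
    (N n).IsBase F ↔ NoBond F ∧ ∀ x, x ∉ F → ¬ NoBond (insert x F) :=
  base_iff_of_indep N_E (fun _ => N_indep_noBond_iff) (fun _ _ h hsub => h.mono hsub)

/-! ### The upper bound: spectrum values are at most `n` -/

def copyOf : A n → Fin n := Sum.elim Prod.fst Prod.fst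

lemma core_injOn {T C : Set (A n)} (hT : (K n).IsBase T) (hC : C ⊆ T)
    (htr : ∀ m a b, a ≤ b → ∃ z ∈ Bd m a b, z ∈ C) :
    InjOn copyOf (T \ C) := by
  classical
  have hforce : ∀ (m : Fin n) (a b : ℕ), a ≤ b → ∀ zset : Set (A n),
      (∀ z, z ∈ Bd m a b → z ∈ T → z ∈ zset) → (∀ z ∈ zset, z ∉ C) → False := by
    intro m a b hab zset hsub hz
    obtain ⟨z, hzD, hzC⟩ := htr m a b hab
    exact hz z (hsub z hzD (hC hzC)) hzC
  have hstart : ∀ (m : Fin n) (i : ℕ), ∃ a, a ≤ i ∧ Conn T m a i ∧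
      (0 < a → qe m (a - 1) ∉ T) := by
    intro m i
    obtain ⟨a, ha, hamin⟩ := nat_least (⟨i, fun k h1 h2 => absurd h2 (by omega)⟩ :
      ∃ a, Conn T m a i)
    refine ⟨a, ?_, ha, ?_⟩
    · by_contra h
      exact hamin i (by omega) (fun k h1 h2 => absurd h2 (by omega))
    · intro hpos hq
      refine hamin (a - 1) (by omega) ?_
      intro k h1 h2
      rcases Nat.eq_or_lt_of_le h1 with h | h
      · rwa [← h]
      · exact ha k (by omega) h2
  have hend : ∀ (m : Fin n) (i : ℕ), (∃ b, i ≤ b ∧ qe m b ∉ T) →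
      ∃ b, i ≤ b ∧ qe m b ∉ T ∧ Conn T m i b := by
    intro m i hex
    obtain ⟨b, ⟨hib, hqb⟩, hbmin⟩ := nat_least hex
    refine ⟨b, hib, hqb, ?_⟩
    intro k h1 h2
    by_contra hk
    exact hbmin k h2 ⟨h1, hk⟩
  have huniq : ∀ {m : Fin n} {c c' : ℕ}, sp m c ∈ T → sp m c' ∈ T → Same T m c c' → c = c' :=
    fun hc hc' hs => base_spoke_unique hT hc hc' hs
  -- a spoke whose component is right-bounded is forced
  have Lsp : ∀ (m : Fin n) (c : ℕ), sp m c ∈ T → sp m c ∉ C →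
      (∃ b, c ≤ b ∧ qe m b ∉ T) → False := by
    intro m c hcT hcC hbd
    obtain ⟨a, hac, hConn_ac, hbdry⟩ := hstart m c
    obtain ⟨b, hcb, hqb, hConn_cb⟩ := hend m c hbd
    have hConn_ab : Conn T m a b := conn_trans hConn_ac hConn_cb hac
    refine hforce m a b (by omega) {sp m c} ?_ ?_
    · rintro z (rfl | ⟨k, hk1, hk2, rfl⟩ | ⟨hpos, rfl⟩) hzT
      · exact absurd hzT hqb
      · have hkc : k = c := by
          rcases le_total k c with h | h
          · exact huniq hzT hcT (Or.inl ⟨h, conn_sub hConn_ab hk1 hcb⟩)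
          · exact huniq hzT hcT (Or.inr ⟨h, conn_sub hConn_ab hac hk2⟩)
        rw [hkc]; exact mem_singleton _
      · exact absurd hzT (hbdry hpos)
    · intro z hz
      rw [mem_singleton_iff] at hz
      subst hz
      exact hcC
  -- a path edge with the component spoke strictly to its right is forced
  have Lqr : ∀ (m : Fin n) (k c : ℕ), qe m k ∈ T → qe m k ∉ C → sp m c ∈ T →
      Conn T m k c → k < c → False := by
    intro m k c hkT hkC hcT hconn hkc
    obtain ⟨a, hak, hConn_ak, hbdry⟩ := hstart m k
    refine hforce m a k hak {qe m k} ?_ ?_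
    · rintro z (rfl | ⟨j, hj1, hj2, rfl⟩ | ⟨hpos, rfl⟩) hzT
      · exact mem_singleton _
      · have hjc : j = c := huniq hzT hcT
          (Or.inl ⟨by omega, conn_trans (conn_sub hConn_ak hj1 le_rfl) hconn hj2⟩)
        omega
      · exact absurd hzT (hbdry hpos)
    · intro z hz
      rw [mem_singleton_iff] at hz
      subst hz
      exact hkC
  -- a path edge in a right-bounded component with spoke to the left is forced
  have Lqb : ∀ (m : Fin n) (k c : ℕ), qe m k ∈ T → qe m k ∉ C → sp m c ∈ T →
      Conn T m c k → c ≤ k → (∃ b, k + 1 ≤ b ∧ qe m b ∉ T) → False := by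
    intro m k c hkT hkC hcT hconn hck hbd
    obtain ⟨b, hkb, hqb, hConn_kb⟩ := hend m (k + 1) hbd
    refine hforce m (k + 1) b hkb {qe m k} ?_ ?_
    · rintro z (rfl | ⟨j, hj1, hj2, rfl⟩ | ⟨hpos, rfl⟩) hzT
      · exact absurd hzT hqb
      · have hconn_cj : Conn T m c j := by
          have h1 : Conn T m c (k + 1) := by
            intro k' hk1 hk2
            rcases lt_or_eq_of_le (Nat.lt_succ_iff.1 hk2) with h | h
            · exact hconn k' hk1 h
            · rw [h]; exact hkT
          exact conn_trans h1 (conn_sub hConn_kb le_rfl hj2) (by omega)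
        have := huniq hzT hcT (Or.inr ⟨by omega, hconn_cj⟩)
        omega
      · have heq : qe m (k + 1 - 1) = qe m k := by norm_num
        rw [heq]; exact mem_singleton _
    · intro z hz
      rw [mem_singleton_iff] at hz
      subst hz
      exact hkC
  -- pair bond: spoke + path edge to its right (same component)
  have Psq : ∀ (m : Fin n) (c k : ℕ), sp m c ∈ T → sp m c ∉ C → qe m k ∈ T → qe m k ∉ C →
      Conn T m c k → c ≤ k → False := by
    intro m c k hcT hcC hkT hkC hconn hck
    obtain ⟨a, hac, hConn_ac, hbdry⟩ := hstart m c
    have hConn_ak : Conn T m a k := conn_trans hConn_ac hconn hac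
    refine hforce m a k (by omega) {sp m c, qe m k} ?_ ?_
    · rintro z (rfl | ⟨j, hj1, hj2, rfl⟩ | ⟨hpos, rfl⟩) hzT
      · exact mem_insert_of_mem _ (mem_singleton _)
      · have hjc : j = c := by
          rcases le_total j c with h | h
          · exact huniq hzT hcT (Or.inl ⟨h, conn_sub hConn_ak hj1 hck⟩)
          · exact huniq hzT hcT (Or.inr ⟨h, conn_sub hConn_ak hac hj2⟩)
        rw [hjc]; exact mem_insert _ _
      · exact absurd hzT (hbdry hpos)
    · intro z hz
      rcases hz with rfl | hz
      · exact hcC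
      · rw [mem_singleton_iff] at hz; subst hz; exact hkC
  -- pair bond: two path edges, spoke to the left of both
  have Pqq : ∀ (m : Fin n) (j k c : ℕ), qe m j ∈ T → qe m j ∉ C → qe m k ∈ T → qe m k ∉ C →
      sp m c ∈ T → Conn T m c j → c ≤ j → j < k → Conn T m (j + 1) k → False := by
    intro m j k c hjT hjC hkT hkC hcT hconn_cj hcj hjk hconn
    refine hforce m (j + 1) k (by omega) {qe m j, qe m k} ?_ ?_
    · rintro z (rfl | ⟨j', hj1, hj2, rfl⟩ | ⟨hpos, rfl⟩) hzT
      · exact mem_insert_of_mem _ (mem_singleton _)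
      · have hconn_cj' : Conn T m c j' := by
          have h1 : Conn T m c (j + 1) := by
            intro k' hk1 hk2
            rcases lt_or_eq_of_le (Nat.lt_succ_iff.1 hk2) with h | h
            · exact hconn_cj k' hk1 h
            · rw [h]; exact hjT
          exact conn_trans h1 (conn_sub hconn le_rfl hj2) (by omega)
        have := huniq hzT hcT (Or.inr ⟨by omega, hconn_cj'⟩)
        omega
      · have heq : qe m (j + 1 - 1) = qe m j := by norm_num
        rw [heq]; exact mem_insert _ _
    · intro z hz
      rcases hz with rfl | hz
      · exact hjC
      · rw [mem_singleton_iff] at hz; subst hz; exact hkC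
  -- unforcedness data for a path edge
  have qdata : ∀ (m : Fin n) (k : ℕ), qe m k ∈ T → qe m k ∉ C →
      ∃ c, sp m c ∈ T ∧ c ≤ k ∧ Conn T m c k ∧ (∀ b, k + 1 ≤ b → qe m b ∈ T) := by
    intro m k hkT hkC
    obtain ⟨c, hSame, hcT⟩ := base_spoke hT m k
    have hck : c ≤ k := by
      rcases hSame with ⟨hle, hconn⟩ | ⟨hle, hconn⟩
      · rcases Nat.eq_or_lt_of_le hle with h | h
        · omega
        · exact (Lqr m k c hkT hkC hcT hconn h).elim
      · exact hle
    have hconn_ck : Conn T m c k := by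
      rcases hSame with ⟨hle, hconn⟩ | ⟨hle, hconn⟩
      · have hek : c = k := by omega
        subst hek
        exact fun k' h1 h2 => absurd h2 (by omega)
      · exact hconn
    refine ⟨c, hcT, hck, hconn_ck, ?_⟩
    intro b hb
    by_contra h
    exact Lqb m k c hkT hkC hcT hconn_ck hck ⟨b, hb, h⟩
  -- mixed pair in the same copy is impossible
  have mixed : ∀ (m : Fin n) (c k : ℕ), sp m c ∈ T → sp m c ∉ C → qe m k ∈ T → qe m k ∉ C →
      False := by
    intro m c k hcT hcC hkT hkC
    have hU : ∀ b, c ≤ b → qe m b ∈ T := by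
      intro b hb
      by_contra h
      exact Lsp m c hcT hcC ⟨b, hb, h⟩
    obtain ⟨c', hc'T, hc'k, hconn_c'k, hUq⟩ := qdata m k hkT hkC
    rcases le_or_gt c k with h | h
    · exact Psq m c k hcT hcC hkT hkC (fun k' h1 h2 => hU k' h1) h
    · have hconn_kc : Conn T m k c := by
        intro k' h1 h2
        rcases Nat.eq_or_lt_of_le h1 with heq | hlt
        · rw [← heq]; exact hkT
        · exact hUq k' (by omega)
      have hcc : c' = c :=
        huniq hc'T hcT (same_trans (Or.inl ⟨hc'k, hconn_c'k⟩) (Or.inr ⟨by omega, hconn_kc⟩))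
      omega
  rintro x ⟨hxT, hxC⟩ y ⟨hyT, hyC⟩ hcopy
  by_contra hne
  rcases x with ⟨mx, i⟩ | ⟨mx, i⟩ <;> rcases y with ⟨my, j⟩ | ⟨my, j⟩ <;>
    simp only [copyOf, Sum.elim_inl, Sum.elim_inr] at hcopy <;> subst hcopy
  · -- two spokes
    have hUx : ∀ b, i ≤ b → qe mx b ∈ T := by
      intro b hb
      by_contra h
      exact Lsp mx i hxT hxC ⟨b, hb, h⟩
    have hUy : ∀ b, j ≤ b → qe mx b ∈ T := by
      intro b hb
      by_contra h
      exact Lsp mx j hyT hyC ⟨b, hb, h⟩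
    have hij : i = j := by
      rcases le_total i j with h | h
      · exact huniq hxT hyT (Or.inl ⟨h, fun k' h1 h2 => hUx k' h1⟩)
      · exact huniq hxT hyT (Or.inr ⟨h, fun k' h1 h2 => hUy k' h1⟩)
    exact hne (by rw [hij])
  · exact mixed mx i j hxT hxC hyT hyC
  · exact mixed mx j i hyT hyC hxT hxC
  · -- two path edges
    have hqq : ∀ (u v : ℕ), u < v → qe mx u ∈ T → qe mx u ∉ C → qe mx v ∈ T → qe mx v ∉ C →
        False := by
      intro u v huv huT huC hvT hvC
      obtain ⟨c, hcT, hcu, hconn_cu, hUq⟩ := qdata mx u huT huC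
      exact Pqq mx u v c huT huC hvT hvC hcT hconn_cu hcu huv
        (fun k' h1 h2 => hUq k' h1)
    rcases lt_trichotomy i j with h | h | h
    · exact hqq i j h hxT hxC hyT hyC
    · exact hne (by rw [h])
    · exact hqq j i h hyT hyC hxT hxC

lemma spec_le {F B : Set (A n)} (hF : (N n).IsBase F) (hB : (M n).IsBase B) (hBF : B ⊆ F) :
    (F \ B).encard ≤ (n : ℕ∞) := by
  have hT : (K n).IsBase (univ \ B) := M_base_iff.1 hB
  have hnb : NoBond F := (N_base_iff.1 hF).1
  have hC : (univ \ F) ⊆ (univ \ B) := fun z hz => ⟨trivial, fun hzB => hz.2 (hBF hzB)⟩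
  have htr : ∀ m a b, a ≤ b → ∃ z ∈ Bd m a b, z ∈ (univ \ F) := by
    intro m a b hab
    by_contra h
    push_neg at h
    refine hnb m a b hab ?_
    intro z hz
    by_contra hzF
    exact (h z hz) ⟨trivial, hzF⟩
  have hinj := core_injOn hT hC htr
  have hsub : F \ B ⊆ (univ \ B) \ (univ \ F) := by
    intro z hz
    exact ⟨⟨trivial, fun h => hz.2 h⟩, fun h => h.2 hz.1⟩
  have hinj2 : InjOn copyOf (F \ B) := hinj.mono hsub
  calc (F \ B).encard = (copyOf '' (F \ B)).encard := (hinj2.encard_image).symm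
    _ ≤ (univ : Set (Fin n)).encard := Set.encard_mono (subset_univ _)
    _ = (n : ℕ∞) := by
        rw [Set.encard_univ, ENat.card_eq_coe_fintype_card, Fintype.card_fin]

/-! ### The lower bound: realizing each value `k ≤ n` -/

def Tk (k : ℕ) : Set (A n) :=
  {x | match x with
    | Sum.inl (m, i) => m.val < k → i ≤ 1
    | Sum.inr (m, j) => m.val < k ∧ 1 ≤ j}

def Ck (k : ℕ) : Set (A n) :=
  {x | match x with
    | Sum.inl (m, i) => m.val < k → i = 0
    | Sum.inr (m, j) => m.val < k ∧ 1 ≤ j}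

lemma mem_Tk_sp {k : ℕ} {m : Fin n} {i : ℕ} : sp m i ∈ (Tk k : Set (A n)) ↔ (m.val < k → i ≤ 1) :=
  Iff.rfl

lemma mem_Tk_qe {k : ℕ} {m : Fin n} {j : ℕ} : qe m j ∈ (Tk k : Set (A n)) ↔ (m.val < k ∧ 1 ≤ j) :=
  Iff.rfl

lemma mem_Ck_sp {k : ℕ} {m : Fin n} {i : ℕ} : sp m i ∈ (Ck k : Set (A n)) ↔ (m.val < k → i = 0) :=
  Iff.rfl

lemma mem_Ck_qe {k : ℕ} {m : Fin n} {j : ℕ} : qe m j ∈ (Ck k : Set (A n)) ↔ (m.val < k ∧ 1 ≤ j) :=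
  Iff.rfl

lemma Tk_base (k : ℕ) : (K n).IsBase (Tk k) := by
  refine K_base_iff.2 ⟨?_, ?_⟩
  · rintro ⟨m, a, b, hab, ha, hb, hc⟩
    rw [mem_Tk_sp] at ha hb
    have h3 := (mem_Tk_qe.1 (hc a le_rfl hab))
    have h1 := ha h3.1
    have h2 := hb h3.1
    omega
  · rintro (⟨m, i⟩ | ⟨m, j⟩) hx hind
    · rw [show (Sum.inl (m, i) : A n) = sp m i from rfl, mem_Tk_sp] at hx
      push_neg at hx
      obtain ⟨hmk, hi⟩ := hx
      refine hind ⟨m, 1, i, by omega, mem_insert_of_mem _ (mem_Tk_sp.2 fun _ => le_rfl),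
        mem_insert _ _, ?_⟩
      intro k' h1 h2
      exact mem_insert_of_mem _ (mem_Tk_qe.2 ⟨hmk, h1⟩)
    · rw [show (Sum.inr (m, j) : A n) = qe m j from rfl, mem_Tk_qe] at hx
      by_cases hmk : m.val < k
      · have hj : j = 0 := by omega
        subst hj
        refine hind ⟨m, 0, 1, by omega, mem_insert_of_mem _ (mem_Tk_sp.2 fun _ => by omega),
          mem_insert_of_mem _ (mem_Tk_sp.2 fun _ => le_rfl), ?_⟩
        intro k' h1 h2
        have : k' = 0 := by omega
        subst this
        exact mem_insert _ _
      · refine hind ⟨m, j, j + 1, by omega, mem_insert_of_mem _ (mem_Tk_sp.2 fun h => absurd h hmk),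
          mem_insert_of_mem _ (mem_Tk_sp.2 fun h => absurd h hmk), ?_⟩
        intro k' h1 h2
        have : k' = j := by omega
        subst this
        exact mem_insert _ _

lemma Ck_N_base (k : ℕ) : (N n).IsBase (univ \ Ck k) := by
  have hmemF : ∀ z : A n, z ∈ univ \ Ck k ↔ z ∉ (Ck k : Set (A n)) := by
    intro z
    simp [mem_diff]
  refine N_base_iff.2 ⟨?_, ?_⟩
  · intro m a b hab hsub
    have hqb : qe m b ∈ univ \ Ck k := hsub (Or.inl rfl)
    rw [hmemF, mem_Ck_qe] at hqb
    push_neg at hqb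
    have hspa : sp m a ∈ univ \ Ck k := hsub (Or.inr (Or.inl ⟨a, le_rfl, hab, rfl⟩))
    rw [hmemF, mem_Ck_sp] at hspa
    push_neg at hspa
    obtain ⟨hmk, ha0⟩ := hspa
    have hb0 := hqb hmk
    omega
  · rintro (⟨m, i⟩ | ⟨m, j⟩) hx hnb
    · have hx2 : sp m i ∈ (Ck k : Set (A n)) := by
        by_contra h
        exact hx ((hmemF _).2 h)
      have hx3 : m.val < k → i = 0 := hx2
      -- x ∈ Ck : m < k → i = 0; two useful bonds
      by_cases hmk : m.val < k
      · have hi0 : i = 0 := hx3 hmk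
        subst hi0
        refine hnb m 0 0 le_rfl ?_
        rintro z (rfl | ⟨t, ht1, ht2, rfl⟩ | ⟨hpos, rfl⟩)
        · refine mem_insert_of_mem _ ((hmemF _).2 ?_)
          rw [mem_Ck_qe]
          omega
        · have : t = 0 := by omega
          subst this
          exact mem_insert _ _
        · omega
      · refine hnb m i i le_rfl ?_
        rintro z (rfl | ⟨t, ht1, ht2, rfl⟩ | ⟨hpos, rfl⟩)
        · refine mem_insert_of_mem _ ((hmemF _).2 ?_)
          rw [mem_Ck_qe]
          exact fun h => absurd h.1 hmk
        · have : t = i := by omega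
          subst this
          exact mem_insert _ _
        · refine mem_insert_of_mem _ ((hmemF _).2 ?_)
          rw [mem_Ck_qe]
          exact fun h => absurd h.1 hmk
    · have hx2 : qe m j ∈ (Ck k : Set (A n)) := by
        by_contra h
        exact hx ((hmemF _).2 h)
      obtain ⟨hmk, hj⟩ := (mem_Ck_qe.1 hx2)
      refine hnb m 1 j hj ?_
      rintro z (rfl | ⟨t, ht1, ht2, rfl⟩ | ⟨hpos, rfl⟩)
      · exact mem_insert _ _
      · refine mem_insert_of_mem _ ((hmemF _).2 ?_)
        rw [mem_Ck_sp]
        omega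
      · refine mem_insert_of_mem _ ((hmemF _).2 ?_)
        rw [mem_Ck_qe]
        omega

lemma spec_realize (k : ℕ) (hk : k ≤ n) :
    ∃ F B : Set (A n), (N n).IsBase F ∧ (M n).IsBase B ∧ B ⊆ F ∧ (F \ B).encard = (k : ℕ∞) := by
  refine ⟨univ \ Ck k, univ \ Tk k, Ck_N_base k, ?_, ?_, ?_⟩
  · rw [M_base_iff, Set.diff_diff_cancel_left (subset_univ _)]
    exact Tk_base k
  · intro z hz
    refine ⟨trivial, fun hzC => hz.2 ?_⟩
    rcases z with ⟨m, i⟩ | ⟨m, j⟩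
    · rw [show (Sum.inl (m, i) : A n) = sp m i from rfl, mem_Ck_sp] at hzC
      rw [show (Sum.inl (m, i) : A n) = sp m i from rfl, mem_Tk_sp]
      omega
    · exact hzC
  · have heq : (univ \ Ck k) \ (univ \ Tk k) = (fun m : Fin n => sp m 1) '' {m | m.val < k} := by
      ext z
      constructor
      · rintro ⟨⟨-, hzC⟩, hzT⟩
        have hzT2 : z ∈ (Tk k : Set (A n)) := by
          by_contra h
          exact hzT ⟨trivial, h⟩
        rcases z with ⟨m, i⟩ | ⟨m, j⟩
        · have hzC' : ¬ (m.val < k → i = 0) := hzC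
          have hzT3 : m.val < k → i ≤ 1 := hzT2
          push_neg at hzC'
          obtain ⟨hmk, hi0⟩ := hzC'
          have hle := hzT3 hmk
          have hi1 : i = 1 := by omega
          exact ⟨m, hmk, by rw [hi1]; rfl⟩
        · have hzC' : ¬ (m.val < k ∧ 1 ≤ j) := hzC
          have hzT3 : m.val < k ∧ 1 ≤ j := hzT2
          exact absurd hzT3 hzC'
      · rintro ⟨m, hm, rfl⟩
        refine ⟨⟨trivial, fun hc => ?_⟩, fun hd => hd.2 (mem_Tk_sp.2 fun _ => le_rfl)⟩
        have h10 : (1 : ℕ) = 0 := (mem_Ck_sp.1 hc) hm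
        omega
    rw [heq]
    have hinj : InjOn (fun m : Fin n => sp m 1) {m | m.val < k} :=
      fun a _ b _ h => (sp_inj.1 h).1
    rw [hinj.encard_image]
    have hrange : {m : Fin n | m.val < k} = Set.range (Fin.castLE hk) := by
      ext m
      simp only [mem_setOf_eq, Set.mem_range]
      constructor
      · intro h
        exact ⟨⟨m.val, h⟩, by ext; simp⟩
      · rintro ⟨t, rfl⟩
        exact lt_of_lt_of_le t.isLt le_rfl
    rw [hrange, ← Set.image_univ,
      (Set.injOn_of_injective (Fin.castLE_injective hk)).encard_image, Set.encard_univ,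
      ENat.card_eq_coe_fintype_card, Fintype.card_fin]

end S18

/-- For every `n` there is a (nearly finitary) matroid `M`, with
finitarization `N`, whose finitarization spectrum
`{ (F \ B).encard : F base of N, B base of M, B ⊆ F }` is exactly `{0, 1, …, n} ⊆ ℕ∞`;
in particular `M` is nearly finitary and the spectrum has `n + 1` elements. -/
theorem stmt_18 (n : ℕ) :
    ∃ (α : Type) (M N : Matroid α), IsFinitarization N M ∧
      {c : ℕ∞ | ∃ F B, N.IsBase F ∧ M.IsBase B ∧ B ⊆ F ∧ (F \ B).encard = c} =
        {c : ℕ∞ | c ≤ (n : ℕ∞)} ∧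
      (∀ F B, N.IsBase F → M.IsBase B → B ⊆ F → (F \ B).Finite) ∧
      {c : ℕ∞ | ∃ F B, N.IsBase F ∧ M.IsBase B ∧ B ⊆ F ∧ (F \ B).encard = c}.encard =
        (n + 1 : ℕ∞) := by
  classical
  have hspec : {c : ℕ∞ | ∃ F B, (S18.N n).IsBase F ∧ (S18.M n).IsBase B ∧ B ⊆ F ∧
      (F \ B).encard = c} = {c : ℕ∞ | c ≤ (n : ℕ∞)} := by
    ext c
    simp only [Set.mem_setOf_eq]
    constructor
    · rintro ⟨F, B, hF, hB, hBF, rfl⟩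
      exact S18.spec_le hF hB hBF
    · intro hc
      obtain ⟨k, rfl, hk⟩ := ENat.le_coe_iff.1 hc
      exact S18.spec_realize k hk
  refine ⟨S18.A n, S18.M n, S18.N n, S18.isFin, hspec, ?_, ?_⟩
  · intro F B hF hB hBF
    exact Set.finite_of_encard_le_coe (S18.spec_le hF hB hBF)
  · rw [hspec]
    have h2 : {c : ℕ∞ | c ≤ (n : ℕ∞)} = (fun k : ℕ => (k : ℕ∞)) '' (Set.Iic n) := by
      ext c
      simp only [Set.mem_setOf_eq, Set.mem_image, Set.mem_Iic]
      constructor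
      · intro hc
        obtain ⟨k, rfl, hk⟩ := ENat.le_coe_iff.1 hc
        exact ⟨k, hk, rfl⟩
      · rintro ⟨k, hk, rfl⟩
        exact_mod_cast hk
    rw [h2, (Set.injOn_of_injective Nat.cast_injective).encard_image, ← Finset.coe_Iic,
      Set.encard_coe_eq_coe_finsetCard, Nat.card_Iic]
    push_cast
    ring
end

section
/- Let K be a field, let V be a Hausdorff topological K-vector space (a T2 topological additive group with continuous scalar multiplication), let E be a countable type and f : E → V. For S ⊆ E let C_S(f) := { c : E → K | c vanishes outside S and the family (c e • f e) is summable }, and let f̂(c) := ∑' e, c e • f e. Call S ⊆ E independent if the only c ∈ C_S(f) with f̂(c) = 0 is c = 0. Then an independent set S is maximal among independent sets if and only if for every e ∈ E one has f e ∈ f̂(C_S(f)), i.e. there exists c ∈ C_S(f) with f̂(c) = f e. -/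
section TopologicalIndependence

variable {K V E : Type*} [Field K] [AddCommGroup V] [Module K V]
  [TopologicalSpace V] [T2Space V]

/-- `C_S(f)`: coefficient functions supported in `S` for which `e ↦ c e • f e`
is summable. -/
def coeffSet (f : E → V) (S : Set E) : Set (E → K) :=
  {c | (∀ e ∉ S, c e = 0) ∧ Summable fun e => c e • f e}

/-- `f̂(c) = ∑' e, c e • f e`. -/
noncomputable def fhat (f : E → V) (c : E → K) : V := ∑' e, c e • f e

/-- `S` is independent in the topological independence system `M_f` if the only
`c ∈ C_S(f)` with `f̂(c) = 0` is `c = 0`. -/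
def TopIndep (f : E → V) (S : Set E) : Prop :=
  ∀ c ∈ coeffSet (K := K) f S, fhat f c = 0 → c = 0

/-- In a topological independence system over a Hausdorff topological vector
space, with countable index set, an independent set `S` is maximal among independent sets
iff for every `e` one has `f e ∈ f̂(C_S(f))`. -/
theorem stmt_19 [TopologicalSpace K] [IsTopologicalAddGroup V] [ContinuousSMul K V]
    [Countable E]
    (f : E → V) (S : Set E) (hS : TopIndep (K := K) f S) :
    Maximal (TopIndep (K := K) f) S ↔
      ∀ e : E, ∃ c ∈ coeffSet (K := K) f S, fhat f c = f e := by
  classical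
  -- delta function facts
  have hδsupp : ∀ e : E, (Function.support fun x => (if x = e then (1:K) else 0) • f x).Finite := by
    intro e
    apply Set.Finite.subset (Set.finite_singleton e)
    intro x hx
    simp only [Function.mem_support] at hx
    simp only [Set.mem_singleton_iff]
    by_contra hxe
    exact hx (by simp [hxe])
  have hδsum : ∀ e : E, Summable (fun x => (if x = e then (1:K) else 0) • f x) :=
    fun e => summable_of_finite_support (hδsupp e)
  have hδtsum : ∀ e : E, (∑' x, (if x = e then (1:K) else 0) • f x) = f e := by
    intro e
    rw [tsum_eq_single e (by intro b hb; simp [hb])]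
    simp
  constructor
  · rintro ⟨-, hmax⟩ e
    by_cases he : e ∈ S
    · refine ⟨fun x => if x = e then 1 else 0, ⟨?_, hδsum e⟩, hδtsum e⟩
      intro x hx
      simp only [ite_eq_right_iff, one_ne_zero]
      rintro rfl; exact hx he
    · -- S ∪ {e} is not independent
      have hnot : ¬ TopIndep (K := K) f (S ∪ {e}) := by
        intro hT
        have hle : S ≤ S ∪ {e} := Set.subset_union_left
        have := hmax hT hle
        exact he (this (Set.mem_union_right _ rfl))
      simp only [TopIndep, not_forall] at hnot
      obtain ⟨c, hc, hc0, hcne⟩ := hnot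
      obtain ⟨hcsupp, hcsum⟩ := hc
      have hce : c e ≠ 0 := by
        intro hce
        apply hcne
        apply hS c ⟨?_, hcsum⟩ hc0
        intro x hx
        rcases eq_or_ne x e with rfl | hxe
        · exact hce
        · exact hcsupp x (by simp [hx, hxe])
      -- c' x = -(c e)⁻¹ * (c x) for x ≠ e, 0 at e
      set d : E → K := fun x => if x = e then 0 else -(c e)⁻¹ * c x with hd
      have hdsum : Summable (fun x => d x • f x) := by
        have h1 : Summable (fun x => c x • f x - (if x = e then c e else 0) • f x) := by
          apply hcsum.sub
          apply summable_of_finite_support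
          apply Set.Finite.subset (Set.finite_singleton e)
          intro x hx
          simp only [Function.mem_support] at hx
          simp only [Set.mem_singleton_iff]
          by_contra hxe
          exact hx (by simp [hxe])
        have h2 : Summable (fun x => (-(c e)⁻¹) • (c x • f x - (if x = e then c e else 0) • f x)) :=
          h1.const_smul _
        convert h2 using 1
        funext x
        rcases eq_or_ne x e with rfl | hxe
        · simp [hd]
        · simp [hd, hxe, smul_smul]
      refine ⟨d, ⟨?_, hdsum⟩, ?_⟩
      · intro x hx
        rcases eq_or_ne x e with rfl | hxe
        · simp [hd]
        · have : c x = 0 := hcsupp x (by simp [hx, hxe])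
          simp [hd, hxe, this]
      · -- fhat f d = f e
        have key : ∀ x, d x • f x = (-(c e)⁻¹) • (c x • f x - (if x = e then c e else 0) • f x) := by
          intro x
          rcases eq_or_ne x e with rfl | hxe
          · simp [hd]
          · simp [hd, hxe, smul_smul]
        have h1 : Summable (fun x => (if x = e then c e else 0) • f x) := by
          apply summable_of_finite_support
          apply Set.Finite.subset (Set.finite_singleton e)
          intro x hx
          simp only [Function.mem_support] at hx
          simp only [Set.mem_singleton_iff]
          by_contra hxe
          exact hx (by simp [hxe])
        have h1t : (∑' x, (if x = e then c e else 0) • f x) = c e • f e := by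
          rw [tsum_eq_single e (by intro b hb; simp [hb])]
          simp
        calc fhat f d = ∑' x, (-(c e)⁻¹) • (c x • f x - (if x = e then c e else 0) • f x) := by
              unfold fhat; exact tsum_congr key
          _ = (-(c e)⁻¹) • ((∑' x, c x • f x) - ∑' x, (if x = e then c e else 0) • f x) := by
              rw [Summable.tsum_const_smul _ (hcsum.sub h1), Summable.tsum_sub hcsum h1]
          _ = f e := by
              have : (∑' x, c x • f x) = 0 := hc0
              rw [this, h1t, zero_sub, smul_neg, neg_smul, neg_neg, smul_smul,
                inv_mul_cancel₀ hce, one_smul]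
  · intro h
    refine ⟨hS, fun T hT hST x hx => ?_⟩
    by_contra hxS
    obtain ⟨c, ⟨hcsupp, hcsum⟩, hct⟩ := h x
    -- c' = c - δ_x, supported in T, fhat = 0, nonzero
    set d : E → K := fun y => c y - (if y = x then 1 else 0) with hd
    have hdsum : Summable (fun y => d y • f y) := by
      have := hcsum.sub (hδsum x)
      convert this using 1
      funext y
      simp [hd, sub_smul]
    have hdc : d ∈ coeffSet (K := K) f T := by
      refine ⟨?_, hdsum⟩
      intro y hy
      have hyx : y ≠ x := fun hyx => hy (hyx ▸ hx)
      have : c y = 0 := hcsupp y (fun hyS => hy (hST hyS))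
      simp [hd, this, hyx]
    have hd0 : fhat f d = 0 := by
      unfold fhat
      have : (fun y => d y • f y) = fun y => c y • f y - (if y = x then (1:K) else 0) • f y := by
        funext y; simp [hd, sub_smul]
      rw [this, Summable.tsum_sub hcsum (hδsum x), hδtsum x]
      have : (∑' y, c y • f y) = f x := hct
      rw [this, sub_self]
    have := hT d hdc hd0
    have hdx : d x = -1 := by
      have : c x = 0 := hcsupp x hxS
      simp [hd, this]
    rw [this] at hdx
    simp at hdx


end TopologicalIndependence
end
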